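/- arXiv:0908.2319 — 10 statements merged into one kernel-verified Lean document; each statement's English description precedes it below -/
import Mathlib

section
/- If p is an odd Ramanujan prime and p = p_n is the n-th prime, then every integer k with (p+1)/2 ≤ k ≤ (p_{n+1}-1)/2 is composite (i.e., p satisfies Condition 1). -/
/-- `nthPrime n` is the n-th prime with 1-based indexing: p_1 = 2, p_2 = 3, ... -/
noncomputable def nthPrime (n : ℕ) : ℕ := Nat.nth Nat.Prime (n - 1)

/-- The n-th Ramanujan prime: the smallest positive integer R such that for all
integers x ≥ R one has π(x) − π(⌊x/2⌋) ≥ n. -/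
noncomputable def ramanujan (n : ℕ) : ℕ :=
  sInf {R : ℕ | 0 < R ∧ ∀ x : ℕ, R ≤ x →
    n ≤ Nat.primeCounting x - Nat.primeCounting (x / 2)}

/-- A Ramanujan prime is a number of the form R_n for some n ≥ 1. -/
def IsRamanujanPrime (p : ℕ) : Prop := ∃ n : ℕ, 1 ≤ n ∧ p = ramanujan n

/-- If p is an odd Ramanujan prime and p = p_n is the n-th prime, then every
integer k with (p+1)/2 ≤ k ≤ (p_{n+1}-1)/2 is composite (Condition 1). -/
theorem ramanujan_satisfies_condition1 (p n : ℕ) (hn : 1 ≤ n)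
    (hp : p = nthPrime n) (hodd : Odd p) (hram : IsRamanujanPrime p) :
    ∀ k : ℕ, (p + 1) / 2 ≤ k → k ≤ (nthPrime (n + 1) - 1) / 2 → ¬ k.Prime := by
  intro k hk1 hk2 hkp
  obtain ⟨m, hm1, hpm⟩ := hram
  set S := {R : ℕ | 0 < R ∧ ∀ x : ℕ, R ≤ x →
    m ≤ Nat.primeCounting x - Nat.primeCounting (x / 2)} with hS
  have hpp : p.Prime := by
    rw [hp, nthPrime]; exact Nat.nth_mem_of_infinite Nat.infinite_setOf_prime _
  have hp3 : 3 ≤ p := by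
    rcases hodd with ⟨t, ht⟩
    have := hpp.two_le
    omega
  have hSne : S.Nonempty := by
    by_contra h
    rw [Set.not_nonempty_iff_eq_empty] at h
    have h0 : ramanujan m = 0 := by rw [ramanujan, ← hS, h, Nat.sInf_empty]
    omega
  have hreq : ramanujan m = sInf S := rfl
  have hpS : p ∈ S := by rw [hpm, hreq]; exact Nat.sInf_mem hSne
  have hlt : p - 1 < sInf S := by rw [← hreq, ← hpm]; omega
  have hnotS : p - 1 ∉ S := Nat.notMem_of_lt_sInf hlt
  -- failing x must be p - 1
  have hfail : Nat.primeCounting (p - 1) - Nat.primeCounting ((p - 1) / 2) < m := by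
    by_contra hc
    apply hnotS
    refine ⟨by omega, fun x hx => ?_⟩
    rcases eq_or_lt_of_le hx with h | h
    · rw [← h]; omega
    · exact hpS.2 x (by omega)
  -- prime counting facts
  have hcount : ∀ x : ℕ, Nat.primeCounting x = Nat.count Nat.Prime (x + 1) := fun x => rfl
  have hA : Nat.count Nat.Prime p = n - 1 := by
    rw [hp, nthPrime]
    exact Nat.count_nth_of_infinite Nat.infinite_setOf_prime _
  have hpk : p + 1 ≤ 2 * k := by
    rcases hodd with ⟨t, ht⟩
    omega
  have hk2' : 2 * k + 1 ≤ Nat.nth Nat.Prime n := by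
    have h2 : 1 ≤ Nat.nth Nat.Prime n := (Nat.nth_mem_of_infinite Nat.infinite_setOf_prime n).one_lt.le
    have : nthPrime (n + 1) = Nat.nth Nat.Prime n := rfl
    omega
  -- π(2k) = n
  have h2k : Nat.primeCounting (2 * k) = n := by
    rw [hcount]
    have hub : Nat.count Nat.Prime (2 * k + 1) ≤ n := by
      have := Nat.count_monotone Nat.Prime hk2'
      rwa [Nat.count_nth_of_infinite Nat.infinite_setOf_prime] at this
    have hlb : n ≤ Nat.count Nat.Prime (2 * k + 1) := by
      have h1 : Nat.count Nat.Prime (p + 1) = n := by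
        rw [Nat.count_succ, hA, if_pos hpp]; omega
      have := Nat.count_monotone Nat.Prime (show p + 1 ≤ 2 * k + 1 by omega)
      simp only [h1] at this ⊢
      omega
    omega
  -- π(k) ≥ π((p-1)/2) + 1
  have hπk : Nat.primeCounting ((p - 1) / 2) + 1 ≤ Nat.primeCounting k := by
    rw [hcount, hcount]
    have hks : Nat.count Nat.Prime (k + 1) = Nat.count Nat.Prime k + 1 := by
      rw [Nat.count_succ, if_pos hkp]
    have hle : (p - 1) / 2 + 1 ≤ k := by
      rcases hodd with ⟨t, ht⟩
      omega
    have := Nat.count_monotone Nat.Prime hle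
    omega
  -- π(p-1) = n - 1
  have hpm1 : Nat.primeCounting (p - 1) = n - 1 := by
    rw [hcount]
    have : p - 1 + 1 = p := by omega
    rw [this, hA]
  -- apply membership at x = 2k
  have hmem := hpS.2 (2 * k) (by omega)
  have hdiv : 2 * k / 2 = k := by omega
  rw [hdiv, h2k] at hmem
  rw [hpm1] at hfail
  omega
end

section
/- If p is an odd Ramanujan prime and m is the unique index with p_m < p/2 < p_{m+1}, then the open interval (p, 2p_{m+1}) contains a prime (i.e., p satisfies Condition 2). -/
lemma count_const_aux (a b : ℕ) (hab : a ≤ b)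
    (hnone : ∀ k, a ≤ k → k < b → ¬ k.Prime) :
    Nat.count Nat.Prime b = Nat.count Nat.Prime a := by
  induction b, hab using Nat.le_induction with
  | base => rfl
  | succ b hb ih =>
    rw [Nat.count_succ, if_neg (hnone b hb (Nat.lt_succ_self b)),
      ih (fun k hk hk' => hnone k hk (hk'.trans (Nat.lt_succ_self b))), Nat.add_zero]

/-- If p is an odd Ramanujan prime and m is the unique index with
p_m < p/2 < p_{m+1}, then the open interval (p, 2 p_{m+1}) contains a prime
(Condition 2). -/
theorem ramanujan_satisfies_condition2 (p m : ℕ) (hm : 1 ≤ m)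
    (hp : p.Prime) (hodd : Odd p) (hram : IsRamanujanPrime p)
    (hm1 : 2 * nthPrime m < p) (hm2 : p < 2 * nthPrime (m + 1)) :
    ∃ q : ℕ, q.Prime ∧ p < q ∧ q < 2 * nthPrime (m + 1) := by
  by_contra hcon
  push_neg at hcon
  obtain ⟨n, hn1, hpn⟩ := hram
  set S : Set ℕ := {R : ℕ | 0 < R ∧ ∀ x : ℕ, R ≤ x →
    n ≤ Nat.primeCounting x - Nat.primeCounting (x / 2)} with hS
  have hram_eq : ramanujan n = sInf S := rfl
  have hppos : 0 < p := hp.pos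
  have hSne : S.Nonempty := by
    by_contra h
    rw [Set.not_nonempty_iff_eq_empty] at h
    rw [hram_eq, h, Nat.sInf_empty] at hpn
    omega
  have hmem : p ∈ S := by rw [hpn, hram_eq]; exact Nat.sInf_mem hSne
  have hall : ∀ x : ℕ, p ≤ x →
      n ≤ Nat.primeCounting x - Nat.primeCounting (x / 2) := hmem.2
  have hinf : {q : ℕ | q.Prime}.Infinite := Nat.infinite_setOf_prime
  have hp3 : 3 ≤ p := by
    rcases hp.eq_two_or_odd' with h2 | _
    · exact absurd (h2 ▸ hodd) (by decide)
    · rename_i ho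
      have h2 := hp.two_le
      have h3 := Nat.odd_iff.mp ho
      omega
  -- minimality: p - 1 fails the property
  have hnotmem : p - 1 ∉ S := by
    intro h
    have h1 : sInf S ≤ p - 1 := Nat.sInf_le h
    rw [← hram_eq, ← hpn] at h1
    omega
  have hfail : ∃ x : ℕ, p - 1 ≤ x ∧
      Nat.primeCounting x - Nat.primeCounting (x / 2) < n := by
    by_contra h
    push_neg at h
    exact hnotmem ⟨by omega, fun x hx => h x hx⟩
  obtain ⟨x, hx1, hx2⟩ := hfail
  have hxeq : x = p - 1 := by
    rcases Nat.lt_or_ge x p with h | h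
    · omega
    · exact absurd (hall x h) (by omega)
  subst hxeq
  -- abbreviations
  have hanth : nthPrime m = Nat.nth Nat.Prime (m - 1) := rfl
  have hbnth : nthPrime (m + 1) = Nat.nth Nat.Prime m := by
    rw [nthPrime, Nat.add_sub_cancel]
  rw [hanth] at hm1
  rw [hbnth] at hm2 hcon
  have ha1 : Nat.nth Nat.Prime (m - 1) ≤ (p - 1) / 2 := by omega
  have ha2 : (p - 1) / 2 < Nat.nth Nat.Prime m := by omega
  have hpc : ∀ y : ℕ, Nat.primeCounting y = Nat.count Nat.Prime (y + 1) :=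
    fun y => rfl
  -- π((p-1)/2) = m
  have hcount_half : Nat.primeCounting ((p - 1) / 2) = m := by
    rw [hpc]
    have h1 : m - 1 < Nat.count Nat.Prime ((p - 1) / 2 + 1) :=
      (Nat.lt_nth_iff_count_lt hinf).mpr
        (show Nat.nth Nat.Prime (m - 1) < (p - 1) / 2 + 1 by omega)
    have h2 : Nat.count Nat.Prime ((p - 1) / 2 + 1) ≤ m :=
      (Nat.gc_count_nth hinf).l_le (show (p - 1) / 2 + 1 ≤ Nat.nth Nat.Prime m by omega)
    omega
  -- π(b) = m + 1
  have hcount_b : Nat.primeCounting (Nat.nth Nat.Prime m) = m + 1 := by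
    rw [hpc]; exact Nat.count_nth_succ_of_infinite hinf m
  have hbprime : (Nat.nth Nat.Prime m).Prime := Nat.nth_mem_of_infinite hinf m
  have hb2 : 2 ≤ Nat.nth Nat.Prime m := hbprime.two_le
  -- no primes in (p, 2b]
  have hcount_2b : Nat.count Nat.Prime (2 * Nat.nth Nat.Prime m + 1) = Nat.count Nat.Prime (p + 1) := by
    apply count_const_aux
    · omega
    · intro k hk hk' hkp
      have h1 : 2 * Nat.nth Nat.Prime m ≤ k := hcon k hkp (by omega)
      have h2 : k = 2 * Nat.nth Nat.Prime m := by omega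
      rw [h2] at hkp
      have heven : 2 * Nat.nth Nat.Prime m = 2 := (Nat.Prime.even_iff hkp).mp ⟨Nat.nth Nat.Prime m, by ring⟩
      omega
  -- apply the defining property at x = 2b
  have hkey := hall (2 * Nat.nth Nat.Prime m) (by omega)
  have h2bdiv : 2 * Nat.nth Nat.Prime m / 2 = Nat.nth Nat.Prime m := by omega
  rw [h2bdiv, hcount_b, hpc (2 * Nat.nth Nat.Prime m), hcount_2b] at hkey
  -- π(p) = π(p-1) + 1
  have hpsucc : Nat.count Nat.Prime (p + 1) = Nat.count Nat.Prime p + 1 := by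
    rw [Nat.count_succ, if_pos hp]
  have hpm1 : Nat.primeCounting (p - 1) = Nat.count Nat.Prime p := by
    rw [hpc]; congr 1; omega
  rw [hpm1, hcount_half] at hx2
  rw [hpsucc] at hkey
  have hmle : m ≤ Nat.count Nat.Prime p := by
    have h0 := hcount_half
    rw [hpc] at h0
    have hmono : Nat.count Nat.Prime ((p - 1) / 2 + 1) ≤ Nat.count Nat.Prime p :=
      Nat.count_monotone _ (by omega)
    omega
  omega
end

section
/- For every n ≥ 1, the prime p^{(n)} produced by the following sieve equals the n-th RPR-prime (the n-th smallest element of the set consisting of 2 together with all odd primes satisfying Condition 1). The sieve: B_1 = {b^{(1)}(m)} is the Bertrand sequence defined by b^{(1)}(1) = 2 and, for m ≥ 2, b^{(1)}(m) is the largest prime less than 2·b^{(1)}(m−1); inductively, given B_1, ..., B_{k−1}, let p^{(k)} be the smallest prime not belonging to B_1 ∪ ... ∪ B_{k−1}, and let B_k = {b^{(k)}(m)} be defined by b^{(k)}(1) = p^{(k)} and, for m ≥ 2, b^{(k)}(m) the largest prime less than 2·b^{(k)}(m−1); finally set p^{(1)} = 2. -/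
/-- An RPR-prime: either 2, or an odd prime p = p_n satisfying Condition 1, i.e.
every integer k with (p+1)/2 ≤ k ≤ (p_{n+1}-1)/2 is composite. -/
def IsRPR (p : ℕ) : Prop :=
  p = 2 ∨ (p.Prime ∧ Odd p ∧ ∀ n : ℕ, p = nthPrime n →
    ∀ k : ℕ, (p + 1) / 2 ≤ k → k ≤ (nthPrime (n + 1) - 1) / 2 → ¬ k.Prime)

/-- The largest prime strictly below N. -/
noncomputable def largestPrimeBelow (N : ℕ) : ℕ := sSup {q : ℕ | q.Prime ∧ q < N}

/-- The Bertrand-type sequence starting at s: b(0) = s and b(m+1) is the largest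
prime less than 2·b(m).  (This is the paper's b^{(k)} with b^{(k)}(1) = s.) -/
noncomputable def bertSeq (s : ℕ) : ℕ → ℕ
  | 0 => s
  | m + 1 => largestPrimeBelow (2 * bertSeq s m)

/-- The sieve sequence (0-indexed): `sieveP 0 = 2` is the paper's p^{(1)}, and
`sieveP j` for j ≥ 1 is the paper's p^{(j+1)}, namely the smallest prime not
belonging to any of the Bertrand sequences B_1, ..., B_j started at the previous
values p^{(1)}, ..., p^{(j)}. -/
noncomputable def sieveP (n : ℕ) : ℕ :=
  Nat.strongRecOn n fun j ih =>
    match j, ih with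
    | 0, _ => 2
    | j + 1, ih =>
      sInf {q : ℕ | q.Prime ∧ ∀ i : ℕ, ∀ h : i < j + 1, ∀ m : ℕ, q ≠ bertSeq (ih i h) m}

/-! ### Auxiliary lemmas -/

section Aux

/-- Basic facts about the largest prime below `2*q` for a prime `q`. -/
lemma lpb_facts {q : ℕ} (hq : q.Prime) :
    (largestPrimeBelow (2 * q)).Prime ∧ q < largestPrimeBelow (2 * q) ∧
      largestPrimeBelow (2 * q) < 2 * q ∧
      ∀ r : ℕ, r.Prime → r < 2 * q → r ≤ largestPrimeBelow (2 * q) := by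
  obtain ⟨r, hr, hqr, hr2⟩ := Nat.exists_prime_lt_and_le_two_mul q hq.pos.ne'
  have hrlt : r < 2 * q := by
    rcases lt_or_eq_of_le hr2 with h | h
    · exact h
    · exfalso
      rcases (Nat.Prime.eq_one_or_self_of_dvd hr 2 (by exact ⟨q, h⟩)) with h2 | h2
      · omega
      · have := hq.two_le; omega
  have hbdd : BddAbove {x : ℕ | x.Prime ∧ x < 2 * q} :=
    ⟨2 * q, fun x hx => le_of_lt hx.2⟩
  have hne : ({x : ℕ | x.Prime ∧ x < 2 * q}).Nonempty := ⟨r, hr, hrlt⟩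
  have hmem : largestPrimeBelow (2 * q) ∈ {x : ℕ | x.Prime ∧ x < 2 * q} :=
    Nat.sSup_mem hne hbdd
  refine ⟨hmem.1, ?_, hmem.2, fun s hs hslt => le_csSup hbdd ⟨hs, hslt⟩⟩
  exact lt_of_lt_of_le hqr (le_csSup hbdd ⟨hr, hrlt⟩)

lemma bertSeq_prime {s : ℕ} (hs : s.Prime) : ∀ m, (bertSeq s m).Prime
  | 0 => hs
  | m + 1 => (lpb_facts (bertSeq_prime hs m)).1

/-- The next prime after a prime `p` is `Nat.nth Nat.Prime (count + 1)`. -/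
lemma nextPrime_facts {p : ℕ} (hp : p.Prime) :
    (Nat.nth Nat.Prime (Nat.count Nat.Prime p + 1)).Prime ∧
      p < Nat.nth Nat.Prime (Nat.count Nat.Prime p + 1) ∧
      ∀ r : ℕ, r.Prime → p < r → Nat.nth Nat.Prime (Nat.count Nat.Prime p + 1) ≤ r := by
  classical
  have hinf := Nat.infinite_setOf_prime
  have hcnt : Nat.nth Nat.Prime (Nat.count Nat.Prime p) = p := Nat.nth_count hp
  refine ⟨Nat.nth_mem_of_infinite hinf _, ?_, ?_⟩
  · conv_lhs => rw [← hcnt]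
    exact (Nat.nth_lt_nth hinf).mpr (Nat.lt_succ_self _)
  · intro r hr hpr
    by_contra hlt
    push_neg at hlt
    have := Nat.le_nth_of_lt_nth_succ hlt hr
    rw [hcnt] at this
    omega

lemma count_prime_two : Nat.count Nat.Prime 2 = 0 := by
  classical
  simp [Nat.count_succ, Nat.count_zero, Nat.not_prime_zero, Nat.not_prime_one]

/-- If an odd prime `p` equals `nthPrime n`, then `n = count + 1`. -/
lemma index_eq {p n : ℕ} (hp : p.Prime) (hp2 : p ≠ 2) (h : p = nthPrime n) :
    n = Nat.count Nat.Prime p + 1 := by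
  classical
  have hinf := Nat.infinite_setOf_prime
  have h2 : Nat.nth Nat.Prime 0 = 2 := by
    have := Nat.nth_count Nat.prime_two
    rwa [count_prime_two] at this
  have hn0 : n ≠ 0 := by
    rintro rfl
    rw [nthPrime] at h
    simp only [Nat.zero_sub] at h
    rw [h2] at h
    exact hp2 h
  have hcnt : Nat.nth Nat.Prime (Nat.count Nat.Prime p) = p := Nat.nth_count hp
  rw [nthPrime] at h
  have : n - 1 = Nat.count Nat.Prime p := Nat.nth_injective hinf (by rw [← h, hcnt])
  omega

/-- From the double inequality in Condition 1 to the inequality on `2*k`. -/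
lemma two_mul_bounds {p k : ℕ} (hp : p.Prime) (hp2 : p ≠ 2) (hk : k.Prime)
    (h1 : (p + 1) / 2 ≤ k)
    (h2 : k ≤ (Nat.nth Nat.Prime (Nat.count Nat.Prime p + 1) - 1) / 2) :
    p < 2 * k ∧ 2 * k < Nat.nth Nat.Prime (Nat.count Nat.Prime p + 1) := by
  obtain ⟨hP, hpP, _⟩ := nextPrime_facts hp
  obtain ⟨a, ha⟩ := hp.odd_of_ne_two hp2
  have hp3 : 3 ≤ p := by have := hp.two_le; omega
  have hP2 : Nat.nth Nat.Prime (Nat.count Nat.Prime p + 1) ≠ 2 := by omega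
  obtain ⟨b, hb⟩ := hP.odd_of_ne_two hP2
  omega

/-- If `p < 2k ≤ nextPrime p` then the largest prime below `2k` is `p`. -/
lemma lpb_eq_of {p k : ℕ} (hp : p.Prime) (hk : k.Prime) (h1 : p < 2 * k)
    (h2 : 2 * k ≤ Nat.nth Nat.Prime (Nat.count Nat.Prime p + 1)) :
    largestPrimeBelow (2 * k) = p := by
  obtain ⟨hprime, _, hlt, hmax⟩ := lpb_facts hk
  obtain ⟨hP, hpP, hPmin⟩ := nextPrime_facts hp
  have hple : p ≤ largestPrimeBelow (2 * k) := hmax p hp h1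
  rcases lt_or_eq_of_le hple with h | h
  · exfalso
    have := hPmin _ hprime h
    omega
  · exact h.symm

/-- An RPR prime is never the largest prime below twice a prime. -/
lemma rpr_not_image {p q : ℕ} (hR : IsRPR p) (hq : q.Prime) :
    largestPrimeBelow (2 * q) ≠ p := by
  obtain ⟨_, hqlt, hlt2, hmax⟩ := lpb_facts hq
  rcases hR with h2 | ⟨hp, hodd, hcond⟩
  · subst h2; have := hq.two_le; omega
  · intro heq
    have hp2 : p ≠ 2 := by rcases hodd with ⟨a, ha⟩; omega
    set c := Nat.count Nat.Prime p with hc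
    obtain ⟨hP, hpP, hPmin⟩ := nextPrime_facts hp
    have hnth : p = nthPrime (c + 1) := by
      rw [nthPrime]; simp only [Nat.add_sub_cancel]
      exact (Nat.nth_count hp).symm
    have hnth2 : nthPrime (c + 1 + 1) = Nat.nth Nat.Prime (c + 1) := by
      simp [nthPrime]
    have hplt : p < 2 * q := by omega
    -- 2q ≤ nextPrime p
    have hP2q : 2 * q ≤ Nat.nth Nat.Prime (c + 1) := by
      by_contra hcon
      push_neg at hcon
      have := hmax _ hP hcon
      omega
    have hp3 : 3 ≤ p := by have := hp.two_le; omega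
    have hPodd : Odd (Nat.nth Nat.Prime (c + 1)) := hP.odd_of_ne_two (by omega)
    obtain ⟨a, ha⟩ := hodd
    obtain ⟨b, hb⟩ := hPodd
    have := hcond (c + 1) hnth q (by omega) (by rw [hnth2]; omega)
    exact this hq

/-- A non-RPR prime is the largest prime below twice some smaller prime. -/
lemma exists_preimage {p : ℕ} (hp : p.Prime) (h : ¬ IsRPR p) :
    ∃ q : ℕ, q.Prime ∧ q < p ∧ largestPrimeBelow (2 * q) = p := by
  rw [IsRPR] at h
  push_neg at h
  obtain ⟨hp2, h⟩ := h
  have hodd : Odd p := hp.odd_of_ne_two hp2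
  obtain ⟨n, hn, k, hk1, hk2, hk⟩ := h hp hodd
  have hne : n = Nat.count Nat.Prime p + 1 := index_eq hp hp2 hn
  subst hne
  have hnth2 : nthPrime (Nat.count Nat.Prime p + 1 + 1)
      = Nat.nth Nat.Prime (Nat.count Nat.Prime p + 1) := by simp [nthPrime]
  rw [hnth2] at hk2
  obtain ⟨h1, h2⟩ := two_mul_bounds hp hp2 hk hk1 hk2
  have heq := lpb_eq_of hp hk h1 (le_of_lt h2)
  obtain ⟨_, hklt, _, _⟩ := lpb_facts hk
  exact ⟨k, hk, by omega, heq⟩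

lemma IsRPR.prime {p : ℕ} (h : IsRPR p) : p.Prime := by
  rcases h with h | h
  · rw [h]; exact Nat.prime_two
  · exact h.1

lemma isRPR_two : IsRPR 2 := Or.inl rfl

lemma sieveP_zero : sieveP 0 = 2 := by
  rw [sieveP, Nat.strongRecOn_eq]

lemma sieveP_succ (j : ℕ) :
    sieveP (j + 1) =
      sInf {q : ℕ | q.Prime ∧ ∀ i : ℕ, i < j + 1 → ∀ m : ℕ, q ≠ bertSeq (sieveP i) m} := by
  rw [sieveP, Nat.strongRecOn_eq]
  rfl

lemma nth_RPR_zero : Nat.nth IsRPR 0 = 2 := by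
  rw [Nat.nth_zero]
  have hne : (setOf IsRPR).Nonempty := ⟨2, isRPR_two⟩
  have hmem := Nat.sInf_mem hne
  have h2 := Nat.sInf_le (show 2 ∈ setOf IsRPR from isRPR_two)
  have := (hmem : IsRPR _).prime.two_le
  change sInf (setOf IsRPR) = 2
  omega

end Aux

/-- The main induction: `sieveP j = Nat.nth IsRPR j` for every `j`. -/
lemma sieveP_eq_nth (j : ℕ) : sieveP j = Nat.nth IsRPR j := by
  classical
  induction j using Nat.strong_induction_on with
  | _ j IH =>
    match j with
    | 0 => rw [sieveP_zero, nth_RPR_zero]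
    | j + 1 =>
      rw [sieveP_succ]
      set T := {q : ℕ | q.Prime ∧ ∀ i : ℕ, i < j + 1 → ∀ m : ℕ, q ≠ bertSeq (sieveP i) m}
        with hT
      -- Coverage lemma: any prime all of whose RPR predecessors have small count
      -- lies in one of the Bertrand sequences B_1, ..., B_{j+1}.
      have cover : ∀ q : ℕ, q.Prime →
          (∀ r : ℕ, r ≤ q → IsRPR r → Nat.count IsRPR r < j + 1) →
          ∃ i : ℕ, i < j + 1 ∧ ∃ m : ℕ, bertSeq (sieveP i) m = q := by
        intro q
        induction q using Nat.strong_induction_on with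
        | _ q IHq =>
          intro hq hsmall
          by_cases hR : IsRPR q
          · refine ⟨Nat.count IsRPR q, hsmall q le_rfl hR, 0, ?_⟩
            rw [IH _ (hsmall q le_rfl hR)]
            exact Nat.nth_count hR
          · obtain ⟨r, hr, hrq, hlpb⟩ := exists_preimage hq hR
            obtain ⟨i, hi, m, hm⟩ := IHq r hrq hr
              (fun s hs hsR => hsmall s (le_trans hs (le_of_lt hrq)) hsR)
            exact ⟨i, hi, m + 1, by rw [bertSeq, hm, hlpb]⟩
      by_cases H : ∀ hf : (setOf IsRPR).Finite, j + 1 < hf.toFinset.card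
      · -- Enough RPR primes: the sieve finds the next one.
        set p := Nat.nth IsRPR (j + 1) with hpdef
        have hpR : IsRPR p := Nat.nth_mem _ H
        have hpmem : p ∈ T := by
          refine ⟨hpR.prime, ?_⟩
          intro i hi m
          cases m with
          | zero =>
            have hlt : Nat.nth IsRPR i < p := Nat.nth_lt_nth' hi H
            rw [bertSeq, IH i hi]
            omega
          | succ m =>
            have hiprime : (sieveP i).Prime := by
              rw [IH i hi]
              exact (Nat.nth_mem i fun hf => lt_trans hi (H hf)).prime
            have hbprime := bertSeq_prime hiprime m
            rw [bertSeq]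
            exact fun h => rpr_not_image hpR hbprime h.symm
        have hlow : ∀ q ∈ T, p ≤ q := by
          intro q hq
          by_contra hlt
          push_neg at hlt
          have hsmall : ∀ r : ℕ, r ≤ q → IsRPR r → Nat.count IsRPR r < j + 1 := by
            intro r hr hrR
            have hcount : Nat.count IsRPR p = j + 1 := Nat.count_nth H
            have hrp : r + 1 ≤ p := by omega
            have hmono := Nat.count_monotone IsRPR hrp
            rw [Nat.count_succ] at hmono
            simp only [hrR, if_true] at hmono
            omega
          obtain ⟨i, hi, m, hm⟩ := cover q hq.1 hsmall
          exact hq.2 i hi m hm.symm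
        have hne : T.Nonempty := ⟨p, hpmem⟩
        have := Nat.sInf_mem hne
        have h1 := Nat.sInf_le hpmem
        have h2 := hlow _ this
        omega
      · -- All RPR primes already used up: both sides are 0.
        push_neg at H
        obtain ⟨hf, hcard⟩ := H
        have hempty : T = ∅ := by
          ext q
          simp only [Set.mem_empty_iff_false, iff_false]
          intro hq
          have hsmall : ∀ r : ℕ, r ≤ q → IsRPR r → Nat.count IsRPR r < j + 1 :=
            fun r _ hrR => lt_of_lt_of_le (Nat.count_lt_card hf hrR) hcard
          obtain ⟨i, hi, m, hm⟩ := cover q hq.1 hsmall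
          exact hq.2 i hi m hm.symm
        rw [hempty, Nat.sInf_empty, Nat.nth_of_card_le hf hcard]

/-- For every n ≥ 1, the n-th prime produced by the sieve equals the n-th
RPR-prime (0-indexed via `Nat.nth`: the (n-1)-st smallest element of the set of
RPR-primes). -/
theorem sieve_eq_nth_RPR (n : ℕ) (hn : 1 ≤ n) :
    sieveP (n - 1) = Nat.nth IsRPR (n - 1) :=
  sieveP_eq_nth (n - 1)
end

section
/- Let m ≥ 2 and suppose the open interval (2p_m, 2p_{m+1}) contains at least one prime. Then the largest prime in this interval is not an RPR-prime, while every other prime in this interval is an RPR-prime. In particular, each interval (2p_m, 2p_{m+1}) contains exactly one prime that is not an RPR-prime, provided it contains a prime at all. -/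
lemma nthp_lt (i j : ℕ) : Nat.nth Nat.Prime i < Nat.nth Nat.Prime j ↔ i < j :=
  Nat.nth_lt_nth Nat.infinite_setOf_prime

lemma nthp_le (i j : ℕ) : Nat.nth Nat.Prime i ≤ Nat.nth Nat.Prime j ↔ i ≤ j :=
  Nat.nth_le_nth Nat.infinite_setOf_prime

lemma no_prime_between (i k : ℕ) (h1 : Nat.nth Nat.Prime i < k)
    (h2 : k < Nat.nth Nat.Prime (i + 1)) : ¬ k.Prime := by
  intro hk
  have h3 := Nat.nth_count hk
  rw [← h3] at h1 h2
  rw [nthp_lt] at h1 h2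
  omega

/-- Let m ≥ 2 and suppose the open interval (2p_m, 2p_{m+1}) contains a prime.
Then a prime q in this interval is an RPR-prime if and only if it is not the
largest prime in the interval (i.e. iff some larger prime lies in the interval).
In particular, the largest prime in the interval is not an RPR-prime, every other
prime in the interval is an RPR-prime, and the interval contains exactly one
non-RPR prime. -/
theorem nonRPR_iff_largest_in_interval (m : ℕ) (hm : 2 ≤ m)
    (hex : ∃ q : ℕ, q.Prime ∧ 2 * nthPrime m < q ∧ q < 2 * nthPrime (m + 1)) :
    ∀ q : ℕ, q.Prime → 2 * nthPrime m < q → q < 2 * nthPrime (m + 1) →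
      (IsRPR q ↔ ∃ r : ℕ, r.Prime ∧ q < r ∧ r < 2 * nthPrime (m + 1)) := by
  intro q hq hq1 hq2
  have hPm : nthPrime m = Nat.nth Nat.Prime (m - 1) := rfl
  have hPm1 : nthPrime (m + 1) = Nat.nth Nat.Prime m := by
    simp [nthPrime]
  have hmm : m - 1 + 1 = m := by omega
  have hpm_prime : (nthPrime m).Prime := Nat.prime_nth_prime _
  have hq4 : 4 < q := by have := hpm_prime.two_le; omega
  have hqodd : Odd q := hq.odd_of_ne_two (by omega)
  obtain ⟨a, ha⟩ := hqodd
  set c := Nat.count Nat.Prime q with hc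
  have hnthc : Nat.nth Nat.Prime c = q := Nat.nth_count hq
  set q' := Nat.nth Nat.Prime (c + 1) with hq'def
  have hq'p : q'.Prime := Nat.prime_nth_prime _
  have hqq' : q < q' := by rw [← hnthc]; exact (nthp_lt c (c + 1)).mpr (by omega)
  have hq'odd : Odd q' := hq'p.odd_of_ne_two (by omega)
  obtain ⟨b, hb⟩ := hq'odd
  constructor
  · rintro (h2 | ⟨-, -, hcond⟩)
    · omega
    · have hqn : q = nthPrime (c + 1) := by simp [nthPrime, hnthc]
      have hcc : nthPrime (c + 1 + 1) = q' := by simp [nthPrime, hq'def]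
      have := hcond (c + 1) hqn (nthPrime (m + 1))
      rw [hcc] at this
      refine ⟨q', hq'p, hqq', ?_⟩
      by_contra hcon
      push_neg at hcon
      have hP1p : (nthPrime (m + 1)).Prime := hPm1 ▸ Nat.prime_nth_prime _
      exact this (by omega) (by omega) hP1p
  · rintro ⟨r, hr, hqr, hr2⟩
    refine Or.inr ⟨hq, ⟨a, ha⟩, ?_⟩
    intro n hn k hk1 hk2
    rcases Nat.eq_zero_or_pos n with hn0 | hn0
    · subst hn0
      have hE : nthPrime (0 + 1) = q := by
        rw [show nthPrime (0 + 1) = nthPrime 0 from rfl, ← hn]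
      rw [hE] at hk2
      omega
    · have hni : q = Nat.nth Nat.Prime (n - 1) := hn
      have hic : n - 1 = c := by
        by_contra hne
        rcases Nat.lt_or_ge (n - 1) c with h | h
        · have := (nthp_lt (n - 1) c).mpr h; omega
        · have := (nthp_lt c (n - 1)).mpr (by omega); omega
      have hnn : nthPrime (n + 1) = q' := by
        simp only [nthPrime, Nat.add_sub_cancel, hq'def]
        congr 1
        omega
      rw [hnn] at hk2
      -- q' ≤ r
      have hcr : c < Nat.count Nat.Prime r := by
        have h3 := Nat.nth_count hr
        have : Nat.nth Nat.Prime c < Nat.nth Nat.Prime (Nat.count Nat.Prime r) := by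
          rw [hnthc, h3]; exact hqr
        exact (nthp_lt _ _).mp this
      have hq'r : q' ≤ r := by
        have := (nthp_le (c + 1) (Nat.count Nat.Prime r)).mpr (by omega)
        rwa [Nat.nth_count hr] at this
      -- so p_m < k < p_{m+1}
      refine no_prime_between (m - 1) k ?_ ?_
      · rw [← hPm]; omega
      · rw [hmm, ← hPm1]
        omega
end

section
/- Assume that R_n / p_{2n} → 1 as n → ∞. Let π_R(n) denote the number of Ramanujan primes not exceeding n and π(n) the number of primes not exceeding n. Then π_R(n)/π(n) → 1/2 as n → ∞. -/
/-- π_R(x): the number of Ramanujan primes not exceeding x. -/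
noncomputable def countRam (x : ℕ) : ℕ :=
  letI := Classical.decPred IsRamanujanPrime
  ((Finset.range (x + 1)).filter IsRamanujanPrime).card

open Filter Finset

namespace RamAux

def fR (x : ℕ) : ℕ := Nat.primeCounting x - Nat.primeCounting (x / 2)

def SR (n : ℕ) : Set ℕ := {R : ℕ | 0 < R ∧ ∀ x : ℕ, R ≤ x → n ≤ fR x}

lemma ram_eq (n : ℕ) : ramanujan n = sInf (SR n) := rfl

lemma SR_anti {n m : ℕ} (h : n ≤ m) : SR m ⊆ SR n :=
  fun R hR => ⟨hR.1, fun x hx => le_trans h (hR.2 x hx)⟩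

lemma pc_succ (x : ℕ) :
    Nat.primeCounting (x+1) = Nat.primeCounting x + if Nat.Prime (x+1) then 1 else 0 := by
  simp [Nat.primeCounting, Nat.primeCounting', Nat.count_succ]

lemma pc_nth (k : ℕ) : Nat.primeCounting (Nat.nth Nat.Prime k) = k + 1 := by
  have h1 : Nat.count Nat.Prime (Nat.nth Nat.Prime k) = k :=
    Nat.count_nth_of_infinite Nat.infinite_setOf_prime k
  have h2 : Nat.Prime (Nat.nth Nat.Prime k) := Nat.prime_nth_prime k
  simp [Nat.primeCounting, Nat.primeCounting', Nat.count_succ, h1, h2]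

section hne

variable (hne : ∀ n, (SR n).Nonempty)
include hne

lemma mem_SR (n : ℕ) : ramanujan n ∈ SR n := ram_eq n ▸ Nat.sInf_mem (hne n)

lemma ram_pos (n : ℕ) : 0 < ramanujan n := (mem_SR hne n).1

lemma ram_mono {n m : ℕ} (h : n ≤ m) : ramanujan n ≤ ramanujan m := by
  rw [ram_eq n]; exact Nat.sInf_le (SR_anti h (mem_SR hne m))

omit hne in
lemma fR_step (x : ℕ) : fR (x+1) ≤ fR x + 1 := by
  have h1 : Nat.primeCounting (x+1) ≤ Nat.primeCounting x + 1 := by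
    rw [pc_succ]; split <;> omega
  have h2 : Nat.primeCounting (x/2) ≤ Nat.primeCounting ((x+1)/2) :=
    Nat.monotone_primeCounting (by omega)
  have h3 : Nat.primeCounting (x/2) ≤ Nat.primeCounting x :=
    Nat.monotone_primeCounting (by omega)
  unfold fR; omega

lemma fR_ram {n : ℕ} (h1 : 1 ≤ n) : fR (ramanujan n) = n := by
  obtain ⟨hpos, hall⟩ := mem_SR hne n
  have hge : n ≤ fR (ramanujan n) := hall _ le_rfl
  have h2 : 2 ≤ ramanujan n := by
    by_contra hc
    have he : ramanujan n = 1 := by omega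
    have h3 := hall 1 (by omega)
    have hf1 : fR 1 = 0 := by simp [fR]
    omega
  have hnotmem : ramanujan n - 1 ∉ SR n := by
    apply Nat.notMem_of_lt_sInf; rw [← ram_eq]; omega
  have hex : ∃ x, ramanujan n - 1 ≤ x ∧ fR x < n := by
    by_contra hc; push_neg at hc
    exact hnotmem ⟨by omega, fun x hx => hc x hx⟩
  obtain ⟨x, hx1, hx2⟩ := hex
  have hxeq : x = ramanujan n - 1 := by
    rcases Nat.lt_or_ge x (ramanujan n) with h | h
    · omega
    · exact absurd (hall x h) (by omega)
  rw [hxeq] at hx2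
  have hstep := fR_step (ramanujan n - 1)
  rw [Nat.sub_add_cancel (by omega)] at hstep
  omega

lemma ram_strict {n m : ℕ} (h1 : 1 ≤ n) (h2 : n < m) : ramanujan n < ramanujan m := by
  rcases eq_or_lt_of_le (ram_mono hne h2.le) with he | h
  · exfalso
    have ha := fR_ram hne h1
    have hb := fR_ram hne (by omega : 1 ≤ m)
    rw [he] at ha; omega
  · exact h

lemma ram_le_self : ∀ {n : ℕ}, 1 ≤ n → n ≤ ramanujan n := by
  intro n
  induction n with
  | zero => omega
  | succ k ih =>
    intro _
    show k + 1 ≤ ramanujan (k + 1)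
    rcases Nat.eq_zero_or_pos k with rfl | hk
    · exact ram_pos hne 1
    · have := ram_strict hne hk (by omega : k < k + 1)
      have := ih hk
      omega

end hne

section hne
variable (hne : ∀ n, (SR n).Nonempty)
include hne

lemma countRam_spec {x : ℕ} (hx : ramanujan 1 ≤ x) :
    1 ≤ countRam x ∧ ramanujan (countRam x) ≤ x ∧ x < ramanujan (countRam x + 1) := by
  classical
  have hx1 : 1 ≤ x := le_trans (ram_pos hne 1) hx
  set T : Finset ℕ := (Finset.Icc 1 x).filter (fun n => ramanujan n ≤ x) with hT
  have h1T : (1:ℕ) ∈ T := by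
    simp only [hT, Finset.mem_filter, Finset.mem_Icc]
    exact ⟨⟨le_refl 1, hx1⟩, hx⟩
  have hTne : T.Nonempty := ⟨1, h1T⟩
  set m := T.max' hTne with hm
  have hmT : m ∈ T := T.max'_mem hTne
  have hm1 : 1 ≤ m := (Finset.mem_Icc.mp (Finset.mem_filter.mp hmT).1).1
  have hmx : ramanujan m ≤ x := (Finset.mem_filter.mp hmT).2
  have hTeq : T = Finset.Icc 1 m := by
    ext n
    simp only [hT, Finset.mem_filter, Finset.mem_Icc]
    constructor
    · rintro ⟨⟨ha, hb⟩, hc⟩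
      refine ⟨ha, T.le_max' n ?_⟩
      simp only [hT, Finset.mem_filter, Finset.mem_Icc]
      exact ⟨⟨ha, hb⟩, hc⟩
    · rintro ⟨ha, hb⟩
      have hrn : ramanujan n ≤ ramanujan m := ram_mono hne hb
      exact ⟨⟨ha, le_trans (le_trans (ram_le_self hne ha) hrn) hmx⟩, le_trans hrn hmx⟩
  have himg : (Finset.range (x+1)).filter IsRamanujanPrime = T.image ramanujan := by
    ext p
    simp only [Finset.mem_filter, Finset.mem_range, Finset.mem_image, hT, Finset.mem_Icc]
    constructor
    · rintro ⟨hp1, n, hn1, rfl⟩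
      exact ⟨n, ⟨⟨hn1, le_trans (ram_le_self hne hn1) (by omega)⟩, by omega⟩, rfl⟩
    · rintro ⟨n, ⟨⟨hn1, _⟩, hnx⟩, rfl⟩
      exact ⟨by omega, n, hn1, rfl⟩
  have hinj : Set.InjOn ramanujan (T : Set ℕ) := by
    intro p hp q hq hpq
    simp only [hT, Finset.coe_filter, Set.mem_setOf_eq, Finset.mem_Icc] at hp hq
    by_contra hne'
    rcases Nat.lt_or_ge p q with h | h
    · exact absurd hpq (Nat.ne_of_lt (ram_strict hne hp.1.1 h))
    · have h' : q < p := by omega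
      exact absurd hpq.symm (Nat.ne_of_lt (ram_strict hne hq.1.1 h'))
  have hcard : countRam x = m := by
    have h1 : countRam x = ((Finset.range (x+1)).filter IsRamanujanPrime).card := by
      simp [countRam]
    rw [h1, himg, Finset.card_image_of_injOn hinj, hTeq, Nat.card_Icc]
    omega
  refine ⟨by omega, by rw [hcard]; exact hmx, ?_⟩
  rw [hcard]
  by_contra hc
  push_neg at hc
  have hmem : m + 1 ∈ T := by
    simp only [hT, Finset.mem_filter, Finset.mem_Icc]
    exact ⟨⟨by omega, le_trans (ram_le_self hne (by omega)) hc⟩, hc⟩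
  have := T.le_max' _ hmem
  omega

lemma countRam_tendsto : Tendsto countRam atTop atTop := by
  rw [tendsto_atTop]
  intro b
  filter_upwards [eventually_ge_atTop (ramanujan (b+1))] with x hx
  have hx1 : ramanujan 1 ≤ x := le_trans (ram_mono hne (by omega)) hx
  obtain ⟨h1, h2, h3⟩ := countRam_spec hne hx1
  by_contra hc
  push_neg at hc
  have h4 : ramanujan (countRam x + 1) ≤ ramanujan (b+1) := ram_mono hne (by omega)
  omega

end hne
end RamAux

namespace RamAux3

lemma pc_split {a b : ℕ} (hab : a ≤ b) :
    Nat.primeCounting b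
      = Nat.primeCounting a + ((Finset.Ico (a+1) (b+1)).filter Nat.Prime).card := by
  have h : Finset.range (b+1) = Finset.range (a+1) ∪ Finset.Ico (a+1) (b+1) := by
    rw [Finset.range_eq_Ico, Finset.range_eq_Ico, Finset.Ico_union_Ico_eq_Ico (by omega) (by omega)]
  have hd : Disjoint ((Finset.range (a+1)).filter Nat.Prime)
      ((Finset.Ico (a+1) (b+1)).filter Nat.Prime) := by
    apply Finset.disjoint_filter_filter
    rw [Finset.disjoint_left]
    intro q hq1 hq2
    simp only [Finset.mem_range] at hq1
    simp only [Finset.mem_Ico] at hq2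
    omega
  simp only [Nat.primeCounting, Nat.primeCounting']
  rw [Nat.count_eq_card_filter_range, Nat.count_eq_card_filter_range, h, Finset.filter_union,
    Finset.card_union_of_disjoint hd]

lemma prime_interval_pow_le {a b : ℕ} (h2 : 2 ≤ a) (hab : a ≤ b) (hb2 : b ≤ 2*a) :
    a ^ ((Finset.Ico (a+1) (b+1)).filter Nat.Prime).card ≤ Nat.choose b (b - a) := by
  set s := (Finset.Ico (a+1) (b+1)).filter Nat.Prime with hs
  have hmem : ∀ q ∈ s, a < q ∧ q ≤ b ∧ Nat.Prime q := by
    intro q hq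
    simp only [hs, Finset.mem_filter, Finset.mem_Ico] at hq
    exact ⟨by omega, by omega, hq.2⟩
  have hdvd : (∏ q ∈ s, q) ∣ Nat.choose b (b-a) := by
    apply Finset.prod_primes_dvd
    · intro q hq; exact (hmem q hq).2.2.prime
    · intro q hq
      obtain ⟨hq1, hq2, hq3⟩ := hmem q hq
      exact hq3.dvd_choose (by omega) (by omega) hq2
  calc a ^ s.card ≤ ∏ q ∈ s, q := by
        simpa using Finset.pow_card_le_prod s (fun q => q) a (fun q hq => (hmem q hq).1.le)
    _ ≤ Nat.choose b (b-a) := Nat.le_of_dvd (Nat.choose_pos (by omega)) hdvd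

lemma hh_le_three_pow (h : ℕ) : (h:ℝ)^h ≤ 3^h * (Nat.factorial h : ℝ) := by
  have hsum := Real.sum_le_exp_of_nonneg (x := (h:ℝ)) (by positivity) (h+1)
  have hterm : (h:ℝ)^h / (Nat.factorial h : ℝ) ≤ Real.exp h := by
    refine le_trans ?_ hsum
    exact Finset.single_le_sum (f := fun i => (h:ℝ)^i / (Nat.factorial i : ℝ))
      (fun i _ => by positivity) (Finset.self_mem_range_succ h)
  have hexp : Real.exp (h:ℝ) ≤ 3^h := by
    have h1 : Real.exp (h:ℝ) = Real.exp 1 ^ h := by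
      rw [← Real.exp_nat_mul]; norm_num
    rw [h1]
    exact pow_le_pow_left₀ (Real.exp_pos 1).le
      (le_trans Real.exp_one_lt_d9.le (by norm_num)) h
  have hfac : (0:ℝ) < (Nat.factorial h : ℝ) := by
    exact_mod_cast Nat.factorial_pos h
  calc (h:ℝ)^h = ((h:ℝ)^h / (Nat.factorial h : ℝ)) * (Nat.factorial h : ℝ) := by field_simp
    _ ≤ Real.exp h * (Nat.factorial h : ℝ) := mul_le_mul_of_nonneg_right hterm hfac.le
    _ ≤ 3^h * (Nat.factorial h : ℝ) := mul_le_mul_of_nonneg_right hexp hfac.le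

lemma log_le_two_sqrt {y : ℝ} (hy : 0 < y) : Real.log y ≤ 2 * Real.sqrt y := by
  have h1 : Real.log y = 2 * Real.log (Real.sqrt y) := by
    rw [Real.log_sqrt hy.le]; ring
  rw [h1]
  have h2 := Real.log_le_sub_one_of_pos (Real.sqrt_pos.mpr hy)
  nlinarith [Real.sqrt_nonneg y]

lemma cheb_upper {a b : ℕ} (h2 : 2 ≤ a) (hab : a ≤ b) (hb2 : b ≤ 2*a) :
    (((Finset.Ico (a+1) (b+1)).filter Nat.Prime).card : ℝ) * Real.log a
      ≤ 2 * Real.sqrt (3 * b * ((b:ℝ) - a)) := by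
  set k := ((Finset.Ico (a+1) (b+1)).filter Nat.Prime).card with hk
  rcases eq_or_lt_of_le hab with rfl | hlt
  · have : k = 0 := by simp [hk]
    rw [this]
    simp only [Nat.cast_zero, zero_mul]
    positivity
  · set h := b - a with hh
    have hh1 : 1 ≤ h := by omega
    have hcast : ((h:ℕ):ℝ) = (b:ℝ) - a := by
      rw [hh]; push_cast [Nat.cast_sub hab]; ring
    have key : (a:ℝ)^k ≤ (3*b/h)^h := by
      have k1 : (a:ℝ)^k ≤ (Nat.choose b h : ℝ) := by
        exact_mod_cast prime_interval_pow_le h2 hab hb2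
      have k2 : (Nat.choose b h : ℝ) * (Nat.factorial h : ℝ) ≤ (b:ℝ)^h := by
        have : Nat.choose b h * Nat.factorial h ≤ b ^ h := by
          rw [Nat.mul_comm, ← Nat.descFactorial_eq_factorial_mul_choose]
          exact Nat.descFactorial_le_pow b h
        exact_mod_cast this
      have k3 := hh_le_three_pow h
      have hfac : (0:ℝ) < (Nat.factorial h : ℝ) := by exact_mod_cast Nat.factorial_pos h
      have hhpos : (0:ℝ) < (h:ℝ) := by exact_mod_cast hh1
      rw [div_pow, le_div_iff₀ (by positivity)]
      calc (a:ℝ)^k * (h:ℝ)^h ≤ (Nat.choose b h : ℝ) * (3^h * (Nat.factorial h : ℝ)) := by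
            apply mul_le_mul k1 k3 (by positivity) (by positivity)
        _ = 3^h * ((Nat.choose b h : ℝ) * (Nat.factorial h : ℝ)) := by ring
        _ ≤ 3^h * (b:ℝ)^h := by
            apply mul_le_mul_of_nonneg_left k2 (by positivity)
        _ = (3*(b:ℝ))^h := by rw [mul_pow]
    have hhpos : (0:ℝ) < (h:ℝ) := by exact_mod_cast hh1
    have hb0 : (0:ℝ) < (b:ℝ) := by exact_mod_cast (by omega : 0 < b)
    have hq : (0:ℝ) < 3*(b:ℝ)/(h:ℝ) := div_pos (by linarith) hhpos
    have ha0 : (0:ℝ) < (a:ℝ) := by exact_mod_cast (by omega : 0 < a)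
    have hlog := Real.log_le_log (pow_pos ha0 k) key
    rw [Real.log_pow, Real.log_pow] at hlog
    have hlog2 : Real.log (3*(b:ℝ)/(h:ℝ)) ≤ 2 * Real.sqrt (3*(b:ℝ)/(h:ℝ)) :=
      log_le_two_sqrt hq
    have hsq : (h:ℝ) * Real.sqrt (3*(b:ℝ)/(h:ℝ)) = Real.sqrt (3*(b:ℝ)*(h:ℝ)) := by
      rw [show (h:ℝ) = Real.sqrt ((h:ℝ)^2) from (Real.sqrt_sq hhpos.le).symm,
        ← Real.sqrt_mul (by positivity)]
      congr 1
      field_simp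
      ring
      rw [Real.sq_sqrt (by positivity)]
    calc (k:ℝ) * Real.log a ≤ (h:ℝ) * Real.log (3*(b:ℝ)/(h:ℝ)) := hlog
      _ ≤ (h:ℝ) * (2 * Real.sqrt (3*(b:ℝ)/(h:ℝ))) :=
          mul_le_mul_of_nonneg_left hlog2 hhpos.le
      _ = 2 * ((h:ℝ) * Real.sqrt (3*(b:ℝ)/(h:ℝ))) := by ring
      _ = 2 * Real.sqrt (3*(b:ℝ)*(h:ℝ)) := by rw [hsq]
      _ = 2 * Real.sqrt (3 * b * ((b:ℝ) - a)) := by rw [hcast]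

lemma cheb_lower {x : ℕ} (hx : 2 ≤ x) :
    ((x:ℝ) - 1) * Real.log 2 ≤ ((Nat.primeCounting x : ℝ) + 1) * Real.log x := by
  set n := x / 2 with hn
  have hn1 : 1 ≤ n := by omega
  have h1 : 4^n ≤ 2*n * Nat.centralBinom n :=
    Nat.four_pow_le_two_mul_self_mul_centralBinom n hn1
  have hcb0 : Nat.centralBinom n ≠ 0 := (Nat.centralBinom_pos n).ne'
  have h2 : Nat.centralBinom n ≤ (2*n) ^ Nat.primeCounting x := by
    have hprod : (Nat.centralBinom n).factorization.prod (fun p k => p ^ k)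
        = Nat.centralBinom n := Nat.factorization_prod_pow_eq_self hcb0
    rw [Finsupp.prod] at hprod
    have hsub : (Nat.centralBinom n).factorization.support
        ⊆ (Finset.range (x+1)).filter Nat.Prime := by
      intro p hp
      rw [Nat.support_factorization] at hp
      have hprime : Nat.Prime p := Nat.prime_of_mem_primeFactors hp
      have hdvd : p ∣ Nat.centralBinom n := Nat.dvd_of_mem_primeFactors hp
      have hν : 1 ≤ (Nat.centralBinom n).factorization p := by
        rw [← Nat.Prime.pow_dvd_iff_le_factorization hprime hcb0, pow_one]
        exact hdvd
      have hple : p ≤ 2*n := by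
        have hb := Nat.pow_factorization_choose_le (p := p) (n := 2*n) (k := n) (by omega)
        calc p = p^1 := (pow_one p).symm
          _ ≤ p^((2*n).choose n).factorization p :=
              Nat.pow_le_pow_right hprime.one_lt.le hν
          _ ≤ 2*n := hb
      simp only [Finset.mem_filter, Finset.mem_range]
      exact ⟨by omega, hprime⟩
    calc Nat.centralBinom n
        = ∏ p ∈ (Nat.centralBinom n).factorization.support,
            p ^ (Nat.centralBinom n).factorization p := hprod.symm
      _ ≤ ∏ _p ∈ (Nat.centralBinom n).factorization.support, (2*n) := by
          apply Finset.prod_le_prod'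
          intro p hp
          have hp' := hp
          rw [Nat.support_factorization] at hp'
          exact Nat.pow_factorization_choose_le (by omega)
      _ = (2*n) ^ (Nat.centralBinom n).factorization.support.card :=
          Finset.prod_const _
      _ ≤ (2*n) ^ Nat.primeCounting x := by
          apply Nat.pow_le_pow_right (by omega)
          calc (Nat.centralBinom n).factorization.support.card
              ≤ ((Finset.range (x+1)).filter Nat.Prime).card := Finset.card_le_card hsub
            _ = Nat.primeCounting x := by
                simp only [Nat.primeCounting, Nat.primeCounting']
                rw [Nat.count_eq_card_filter_range]
  have h3 : (4:ℕ)^n ≤ x ^ (Nat.primeCounting x + 1) := by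
    calc (4:ℕ)^n ≤ 2*n * Nat.centralBinom n := h1
      _ ≤ 2*n * (2*n) ^ Nat.primeCounting x := Nat.mul_le_mul_left _ h2
      _ ≤ x * x ^ Nat.primeCounting x :=
          Nat.mul_le_mul (by omega) (Nat.pow_le_pow_left (by omega) _)
      _ = x ^ (Nat.primeCounting x + 1) := by rw [pow_succ]; ring
  have h4 : (n:ℝ) * Real.log 4 ≤ ((Nat.primeCounting x : ℝ) + 1) * Real.log x := by
    have hc : ((4:ℕ):ℝ)^n ≤ ((x:ℝ))^(Nat.primeCounting x + 1) := by exact_mod_cast h3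
    have := Real.log_le_log (by positivity) hc
    rw [Real.log_pow, Real.log_pow] at this
    push_cast at this ⊢
    convert this using 2
  have h5 : Real.log 4 = 2 * Real.log 2 := by
    rw [show (4:ℝ) = 2^2 by norm_num, Real.log_pow]
    push_cast; ring
  have h6 : ((x:ℝ) - 1) / 2 ≤ (n:ℝ) := by
    have hx' : x ≤ 2*n + 1 := by omega
    have : (x:ℝ) ≤ 2*(n:ℝ) + 1 := by exact_mod_cast hx'
    linarith
  have hl2 : (0:ℝ) < Real.log 2 := Real.log_pos (by norm_num)
  nlinarith [h4, h5, h6, hl2]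


lemma gap {δ : ℝ} (hδ : 0 < δ) :
    ∃ ε : ℝ, 0 < ε ∧ ε ≤ 1 ∧ ∀ᶠ a : ℕ in atTop, ∀ b : ℕ, a ≤ b →
      (b:ℝ) ≤ (1+ε) * a → (Nat.primeCounting b : ℝ) ≤ (1+δ) * (Nat.primeCounting a : ℝ) := by
  have hl2 : (0:ℝ) < Real.log 2 := Real.log_pos (by norm_num)
  set c := δ * Real.log 2 / 8 with hc
  have hc0 : 0 < c := by positivity
  refine ⟨min 1 (c^2/6), by positivity, min_le_left _ _, ?_⟩
  set ε := min 1 (c^2/6) with hε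
  have hεc : ε ≤ c^2/6 := min_le_right _ _
  have hε1 : ε ≤ 1 := min_le_left _ _
  have hε0 : 0 < ε := by positivity
  have hev2 : ∀ᶠ a : ℕ in atTop, Real.log a ≤ (3*(a:ℝ)/4 - 1) * Real.log 2 := by
    have hlo := Asymptotics.isLittleO_iff.mp Real.isLittleO_log_id_atTop
      (show (0:ℝ) < Real.log 2 / 4 by positivity)
    have hlo' := tendsto_natCast_atTop_atTop (R := ℝ) |>.eventually hlo
    filter_upwards [hlo', eventually_ge_atTop 4] with a ha h4
    have ha4 : (4:ℝ) ≤ (a:ℝ) := by exact_mod_cast h4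
    rw [Real.norm_eq_abs, Real.norm_eq_abs, id] at ha
    rw [abs_of_nonneg (Real.log_nonneg (by linarith)),
      abs_of_nonneg (by linarith : (0:ℝ) ≤ (a:ℝ))] at ha
    nlinarith
  filter_upwards [eventually_ge_atTop 2, hev2] with a h2 hlog
  intro b hab hbe
  have ha0 : (0:ℝ) < (a:ℝ) := by exact_mod_cast (by omega : 0 < a)
  have ha1 : (1:ℝ) < (a:ℝ) := by exact_mod_cast (by omega : 1 < a)
  have hloga : 0 < Real.log a := Real.log_pos ha1
  have hb2 : b ≤ 2*a := by
    have h1 : (b:ℝ) ≤ 2*(a:ℝ) := by nlinarith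
    exact_mod_cast h1
  have hk := cheb_upper h2 hab hb2
  have hcl := cheb_lower h2
  have hba : (b:ℝ) - a ≤ ε * a := by linarith
  have hba0 : (0:ℝ) ≤ (b:ℝ) - a := by
    have : (a:ℝ) ≤ (b:ℝ) := by exact_mod_cast hab
    linarith
  have hbr : (b:ℝ) ≤ 2*(a:ℝ) := by exact_mod_cast hb2
  have hs : Real.sqrt (3 * b * ((b:ℝ) - a)) ≤ c * a := by
    have h1 : 3*(b:ℝ)*((b:ℝ) - a) ≤ (c*a)^2 := by
      have hm1 : 3*(b:ℝ)*((b:ℝ)-a) ≤ (6*(a:ℝ))*(ε*a) :=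
        mul_le_mul (by linarith) hba hba0 (by linarith)
      have hm2 : ε*((a:ℝ)*a) ≤ c^2/6*((a:ℝ)*a) :=
        mul_le_mul_of_nonneg_right hεc (by positivity)
      nlinarith
    calc Real.sqrt (3 * b * ((b:ℝ) - a)) ≤ Real.sqrt ((c*a)^2) := Real.sqrt_le_sqrt h1
      _ = c*a := Real.sqrt_sq (by positivity)
  set k := ((Finset.Ico (a+1) (b+1)).filter Nat.Prime).card with hkdef
  have hklog : (k:ℝ) * Real.log a ≤ 2*c*(a:ℝ) := by
    calc (k:ℝ) * Real.log a ≤ 2 * Real.sqrt (3 * b * ((b:ℝ) - a)) := hk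
      _ ≤ 2 * (c*a) := by linarith
      _ = 2*c*(a:ℝ) := by ring
  have hπa : 2*c*(a:ℝ) ≤ δ * ((Nat.primeCounting a : ℝ) * Real.log a) := by
    have h7 : (Nat.primeCounting a : ℝ) * Real.log a ≥ ((a:ℝ)/4) * Real.log 2 := by
      nlinarith
    have h8 : 2*c*(a:ℝ) = δ * (((a:ℝ)/4) * Real.log 2) := by rw [hc]; ring
    rw [h8]
    apply mul_le_mul_of_nonneg_left h7 hδ.le
  have hkle : (k:ℝ) ≤ δ * (Nat.primeCounting a : ℝ) := by
    have h9 : (k:ℝ) * Real.log a ≤ (δ * (Nat.primeCounting a : ℝ)) * Real.log a := by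
      calc (k:ℝ) * Real.log a ≤ 2*c*(a:ℝ) := hklog
        _ ≤ δ * ((Nat.primeCounting a : ℝ) * Real.log a) := hπa
        _ = (δ * (Nat.primeCounting a : ℝ)) * Real.log a := by ring
    exact le_of_mul_le_mul_right h9 hloga
  have hsplit : (Nat.primeCounting b : ℝ) = (Nat.primeCounting a : ℝ) + k := by
    exact_mod_cast congrArg (Nat.cast (R := ℝ)) (pc_split hab)
  rw [hsplit]
  have hπa0 : (0:ℝ) ≤ (Nat.primeCounting a : ℝ) := by positivity
  nlinarith

end RamAux3



set_option maxHeartbeats 1000000 in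
open RamAux RamAux3 in
/-- Assuming Sondow's asymptotic R_n ~ p_{2n}, one has π_R(n)/π(n) → 1/2. -/
theorem countRam_div_primeCounting
    (hR : Filter.Tendsto (fun n : ℕ => (ramanujan n : ℝ) / (nthPrime (2 * n) : ℝ))
      Filter.atTop (nhds 1)) :
    Filter.Tendsto (fun n : ℕ => (countRam n : ℝ) / (Nat.primeCounting n : ℝ))
      Filter.atTop (nhds (1 / 2)) := by
  classical
  have hp2 : ∀ n : ℕ, 0 < nthPrime (2*n) := by
    intro n
    have := (Nat.prime_nth_prime (2*n-1)).two_le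
    show 0 < Nat.nth Nat.Prime (2*n-1)
    omega
  have hnz : ∀ᶠ n : ℕ in Filter.atTop, ramanujan n ≠ 0 := by
    have h := hR.eventually (eventually_gt_nhds (show (1:ℝ)/2 < 1 by norm_num))
    filter_upwards [h] with n hn hc
    rw [hc] at hn
    norm_num at hn
  have hne : ∀ n, (SR n).Nonempty := by
    intro n
    obtain ⟨N, hN⟩ := Filter.eventually_atTop.mp hnz
    have h1 : (SR (max n N)).Nonempty := by
      by_contra hcne
      rw [Set.not_nonempty_iff_eq_empty] at hcne
      exact hN _ (le_max_right n N) (by rw [ram_eq, hcne, Nat.sInf_empty])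
    exact Set.Nonempty.mono (SR_anti (le_max_left n N)) h1
  have hπp : ∀ m : ℕ, 1 ≤ m → (Nat.primeCounting (nthPrime (2*m)) : ℝ) = 2*(m:ℝ) := by
    intro m hm
    have h1 : Nat.primeCounting (nthPrime (2*m)) = 2*m := by
      show Nat.primeCounting (Nat.nth Nat.Prime (2*m-1)) = 2*m
      rw [pc_nth]; omega
    rw [h1]; push_cast; ring
  have BL : ∀ δ : ℝ, 0 < δ → ∀ᶠ m : ℕ in Filter.atTop,
      2*(m:ℝ) ≤ (1+δ) * (Nat.primeCounting (ramanujan m) : ℝ) := by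
    intro δ hδ
    obtain ⟨ε, hε0, hε1, hgap⟩ := gap hδ
    obtain ⟨A, hA⟩ := Filter.eventually_atTop.mp hgap
    have hinv : (1:ℝ)/(1+ε) < 1 := by
      rw [div_lt_one (by linarith)]; linarith
    have hratio := hR.eventually (eventually_gt_nhds hinv)
    filter_upwards [hratio, Filter.eventually_ge_atTop (max A 1)] with m hm hmA
    have hm1 : 1 ≤ m := le_trans (le_max_right A 1) hmA
    have hRA : A ≤ ramanujan m :=
      le_trans (le_trans (le_max_left A 1) hmA) (ram_le_self hne hm1)
    have hπ := hπp m hm1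
    have hp0 : (0:ℝ) < (nthPrime (2*m) : ℝ) := by exact_mod_cast hp2 m
    have hπRnn : (0:ℝ) ≤ (Nat.primeCounting (ramanujan m) : ℝ) := by positivity
    rcases le_or_gt (nthPrime (2*m)) (ramanujan m) with hc | hc
    · have h1 : 2*(m:ℝ) ≤ (Nat.primeCounting (ramanujan m) : ℝ) := by
        rw [← hπ]; exact_mod_cast Nat.monotone_primeCounting hc
      nlinarith
    · have hcond : ((nthPrime (2*m)):ℝ) ≤ (1+ε) * (ramanujan m : ℝ) := by
        rw [div_lt_div_iff₀ (by linarith) hp0] at hm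
        nlinarith
      have happ := hA (ramanujan m) hRA (nthPrime (2*m)) hc.le hcond
      rw [hπ] at happ
      exact happ
  have BU : ∀ δ : ℝ, 0 < δ → ∀ᶠ m : ℕ in Filter.atTop,
      (Nat.primeCounting (ramanujan (m+1)) : ℝ) ≤ (1+δ) * (2*(m:ℝ)+2) := by
    intro δ hδ
    obtain ⟨ε, hε0, hε1, hgap⟩ := gap hδ
    obtain ⟨A, hA⟩ := Filter.eventually_atTop.mp hgap
    have hratio := hR.eventually (eventually_lt_nhds (show (1:ℝ) < 1+ε by linarith))
    obtain ⟨N, hN⟩ := Filter.eventually_atTop.mp hratio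
    filter_upwards [Filter.eventually_ge_atTop (max A N)] with m hm
    have h := hN (m+1) (by
      have := le_max_right A N
      omega)
    have hπ' : (Nat.primeCounting (nthPrime (2*(m+1))) : ℝ) = 2*(m:ℝ)+2 := by
      rw [hπp (m+1) (by omega)]; push_cast; ring
    have hp0 : (0:ℝ) < (nthPrime (2*(m+1)) : ℝ) := by exact_mod_cast hp2 (m+1)
    have hpA : A ≤ nthPrime (2*(m+1)) := by
      have h1 : 2*(m+1)-1+2 ≤ Nat.nth Nat.Prime (2*(m+1)-1) := Nat.add_two_le_nth_prime _
      have h2 : A ≤ m := le_trans (le_max_left A N) hm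
      show A ≤ Nat.nth Nat.Prime (2*(m+1)-1)
      omega
    rcases le_or_gt (ramanujan (m+1)) (nthPrime (2*(m+1))) with hc | hc
    · have h1 : (Nat.primeCounting (ramanujan (m+1)) : ℝ) ≤ 2*(m:ℝ)+2 := by
        rw [← hπ']; exact_mod_cast Nat.monotone_primeCounting hc
      nlinarith [show (0:ℝ) ≤ (m:ℝ) from Nat.cast_nonneg m]
    · have hcond : ((ramanujan (m+1)):ℝ) ≤ (1+ε) * (nthPrime (2*(m+1)) : ℝ) := by
        rw [div_lt_iff₀ hp0] at h
        linarith
      have happ := hA (nthPrime (2*(m+1))) hpA (ramanujan (m+1)) hc.le hcond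
      rw [hπ'] at happ
      exact happ
  rw [Metric.tendsto_atTop]
  intro η hη
  have hδ0 : 0 < min η 1 / 2 := by positivity
  set δ := min η 1 / 2 with hδdef
  have hδη : δ ≤ η/2 := by
    have := min_le_left η 1
    rw [hδdef]; linarith
  have hδ1 : δ ≤ 1/2 := by
    have := min_le_right η 1
    rw [hδdef]; linarith
  obtain ⟨M1, hM1⟩ := Filter.eventually_atTop.mp (BL δ hδ0)
  obtain ⟨M2, hM2⟩ := Filter.eventually_atTop.mp (BU δ hδ0)
  have hct := countRam_tendsto hne
  have hbig : ∀ᶠ x : ℕ in Filter.atTop, max (max M1 M2) (⌈2/η⌉₊ + 1) ≤ countRam x :=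
    hct.eventually_ge_atTop _
  obtain ⟨N0, hN0⟩ := Filter.eventually_atTop.mp
    (hbig.and (Filter.eventually_ge_atTop (ramanujan 1)))
  refine ⟨N0, fun x hx => ?_⟩
  obtain ⟨hcm, hxr⟩ := hN0 x hx
  obtain ⟨h1, h2, h3⟩ := countRam_spec hne hxr
  set m := countRam x with hmdef
  set P := (Nat.primeCounting x : ℝ) with hPdef
  have hP0' : (0:ℝ) ≤ P := by rw [hPdef]; positivity
  have hbl := hM1 m (by omega)
  have hbu := hM2 m (by omega)
  have hmono1 : (Nat.primeCounting (ramanujan m) : ℝ) ≤ P := by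
    rw [hPdef]; exact_mod_cast Nat.monotone_primeCounting h2
  have hmono2 : P ≤ (Nat.primeCounting (ramanujan (m+1)) : ℝ) := by
    rw [hPdef]; exact_mod_cast Nat.monotone_primeCounting (by omega : x ≤ ramanujan (m+1))
  have hP1 : 2*(m:ℝ) ≤ (1+δ)*P :=
    le_trans hbl (mul_le_mul_of_nonneg_left hmono1 (by linarith))
  have hP2 : P ≤ (1+δ)*(2*(m:ℝ)+2) := le_trans hmono2 hbu
  have hm1R : (1:ℝ) ≤ (m:ℝ) := by exact_mod_cast h1
  have hP0 : (0:ℝ) < P := by nlinarith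
  have hmη : 2 ≤ η * (m:ℝ) := by
    have hceil : (2/η:ℝ) ≤ (⌈2/η⌉₊:ℝ) := Nat.le_ceil _
    have hmge : ((⌈2/η⌉₊:ℕ):ℝ) + 1 ≤ (m:ℝ) := by
      exact_mod_cast (show ⌈2/η⌉₊ + 1 ≤ m by omega)
    have hd : (2/η:ℝ) ≤ (m:ℝ) := by linarith
    rw [div_le_iff₀ hη] at hd
    nlinarith
  rw [Real.dist_eq, abs_lt]
  have hub : (m:ℝ)/P < 1/2 + η := by
    rw [div_lt_iff₀ hP0]
    nlinarith [mul_le_mul_of_nonneg_right hδη hP0', mul_pos hη hP0]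
  have hlb : 1/2 - η < (m:ℝ)/P := by
    rcases le_or_gt η (1/2) with hcase | hcase
    · rw [lt_div_iff₀ hP0]
      have hmul : (1/2 - η) * P ≤ (1/2-η)*((1+δ)*(2*(m:ℝ)+2)) :=
        mul_le_mul_of_nonneg_left hP2 (by linarith)
      nlinarith [hmη, mul_le_mul_of_nonneg_right hδη (show (0:ℝ) ≤ (m:ℝ)+1 by linarith),
        mul_nonneg (mul_nonneg hη.le hδ0.le) (show (0:ℝ) ≤ 2*(m:ℝ)+2 by linarith)]
    · have hneg : (1/2 - η) * P < 0 :=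
        mul_neg_of_neg_of_pos (by linarith) hP0
      rw [lt_div_iff₀ hP0]
      nlinarith
  constructor <;> linarith
end

section
/- For every n ≥ 1, π(R_n) − π(⌊R_n/2⌋) = n, where R_n is the n-th Ramanujan prime and π is the prime counting function. -/
section RamanujanRealAux

open Real


theorem ram_real_ineq {x : ℝ} (x_large : (8192 : ℝ) ≤ x) :
    x * (2 * x) ^ √(2 * x) ≤ 4 ^ (x / 6) := by
  let f : ℝ → ℝ := fun x => log x + √(2 * x) * log (2 * x) - log 4 / 6 * x
  have hf' : ∀ x, 0 < x → 0 < x * (2 * x) ^ √(2 * x) / 4 ^ (x / 6) := fun x h =>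
    div_pos (mul_pos h (rpow_pos_of_pos (mul_pos two_pos h) _)) (rpow_pos_of_pos four_pos _)
  have hf : ∀ x, 0 < x → f x = log (x * (2 * x) ^ √(2 * x) / 4 ^ (x / 6)) := by
    intro x h5
    have h6 := mul_pos (zero_lt_two' ℝ) h5
    have h7 := rpow_pos_of_pos h6 (√(2 * x))
    rw [log_div (mul_pos h5 h7).ne' (rpow_pos_of_pos four_pos _).ne', log_mul h5.ne' h7.ne',
      log_rpow h6, log_rpow zero_lt_four, ← mul_div_right_comm, ← mul_div, mul_comm x]
  have h5 : 0 < x := lt_of_lt_of_le (by norm_num1) x_large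
  rw [← div_le_one (rpow_pos_of_pos four_pos _), ← log_nonpos_iff (hf' x h5).le, ← hf x h5]
  have h : ConcaveOn ℝ (Set.Ioi 0.5) f := by
    apply ConcaveOn.sub
    · apply ConcaveOn.add
      · exact strictConcaveOn_log_Ioi.concaveOn.subset
          (Set.Ioi_subset_Ioi (by norm_num)) (convex_Ioi 0.5)
      convert ((strictConcaveOn_sqrt_mul_log_Ioi.concaveOn.comp_linearMap
        ((2 : ℝ) • LinearMap.id))) using 1
      · rfl
      · rfl
      ext x
      simp only [Set.mem_Ioi, Set.mem_preimage, LinearMap.smul_apply,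
        LinearMap.id_coe, id_eq, smul_eq_mul]
      rw [← mul_lt_mul_iff_right₀ (two_pos)]
      norm_num1
      rfl
      rfl
    apply ConvexOn.smul
    · refine div_nonneg (log_nonneg (by norm_num1)) (by norm_num1)
    · exact convexOn_id (convex_Ioi (0.5 : ℝ))
  suffices ∃ x1 x2, 0.5 < x1 ∧ x1 < x2 ∧ x2 ≤ x ∧ 0 ≤ f x1 ∧ f x2 ≤ 0 by
    obtain ⟨x1, x2, h1, h2, h0, h3, h4⟩ := this
    exact (h.right_le_of_le_left'' h1 ((h1.trans h2).trans_le h0) h2 h0 (h4.trans h3)).trans h4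
  refine ⟨18, 8192, by norm_num1, by norm_num1, x_large, ?_, ?_⟩
  · have : √(2 * 18 : ℝ) = 6 := (sqrt_eq_iff_mul_self_eq_of_pos (by norm_num1)).mpr (by norm_num1)
    rw [hf _ (by norm_num1), log_nonneg_iff (by positivity), this, one_le_div (by norm_num1)]
    norm_num1
  · have : √(2 * 8192) = 128 :=
      (sqrt_eq_iff_mul_self_eq_of_pos (by norm_num1)).mpr (by norm_num1)
    rw [hf _ (by norm_num1), log_nonpos_iff (hf' _ (by norm_num1)).le, this,
        div_le_one (by positivity)]
    conv in 8192 => equals 2 ^ 13 => norm_num1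
    conv in 2 * 8192 => equals 2 ^ 14 => norm_num1
    conv in 128 => rw [← Nat.cast_ofNat]
    rw [rpow_natCast, ← pow_mul, ← pow_add]
    conv in 4 => equals 2 ^ (2 : ℝ) => rw [rpow_two]; norm_num1
    rw [← rpow_mul, ← rpow_natCast]
    on_goal 1 => apply rpow_le_rpow_of_exponent_le
    all_goals norm_num1

theorem ram_real_main {x m : ℝ} (x_large : (8192 : ℝ) ≤ x) (hm : 0 ≤ m)
    (hmx : m ≤ √(2 * x)) : x * (2 * x) ^ (√(2 * x) + m) * 4 ^ (2 * x / 3) ≤ 4 ^ x := by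
  have hx1 : (1 : ℝ) ≤ x := by linarith
  have h2x : (0 : ℝ) < 2 * x := by linarith
  have h2x1 : (1 : ℝ) ≤ 2 * x := by linarith
  have key : x * (2 * x) ^ (√(2 * x) + m) ≤ 4 ^ (x / 3) := by
    rw [rpow_add h2x, ← mul_assoc]
    have h1 : (2 * x) ^ m ≤ (2 * x) ^ √(2 * x) := rpow_le_rpow_of_exponent_le h2x1 hmx
    have h2 : (2 * x) ^ √(2 * x) ≤ x * (2 * x) ^ √(2 * x) := by
      nlinarith [rpow_pos_of_pos h2x (√(2 * x))]
    calc x * (2 * x) ^ √(2 * x) * (2 * x) ^ m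
        ≤ 4 ^ (x / 6) * (2 * x) ^ √(2 * x) := by
          have := ram_real_ineq x_large
          have hp : (0:ℝ) < (2 * x) ^ √(2 * x) := rpow_pos_of_pos h2x _
          nlinarith [rpow_pos_of_pos (show (0:ℝ) < 4 by norm_num) (x/6)]
      _ ≤ 4 ^ (x / 6) * (x * (2 * x) ^ √(2 * x)) := by
          have hp : (0:ℝ) < 4 ^ (x/6) := rpow_pos_of_pos (by norm_num) _
          nlinarith
      _ ≤ 4 ^ (x / 6) * 4 ^ (x / 6) := by
          have hp : (0:ℝ) < 4 ^ (x/6) := rpow_pos_of_pos (by norm_num) _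
          nlinarith [ram_real_ineq x_large]
      _ = 4 ^ (x / 3) := by rw [← rpow_add (by norm_num : (0:ℝ) < 4)]; ring_nf
  calc x * (2 * x) ^ (√(2 * x) + m) * 4 ^ (2 * x / 3)
      ≤ 4 ^ (x / 3) * 4 ^ (2 * x / 3) := by
        have hp : (0:ℝ) < 4 ^ (2*x/3) := rpow_pos_of_pos (by norm_num) _
        nlinarith
    _ = 4 ^ x := by rw [← rpow_add (by norm_num : (0:ℝ) < 4)]; ring_nf


end RamanujanRealAux

section RamanujanNatAux

open Nat Finset

theorem ram_nat_main {n m : ℕ} (n_large : 8192 ≤ n) (hm : m * m ≤ n) :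
    n * (2 * n) ^ (Nat.sqrt (2 * n) + m) * 4 ^ (2 * n / 3) ≤ 4 ^ n := by
  have hmx : (m : ℝ) ≤ √(2 * (n : ℝ)) := by
    apply Real.le_sqrt_of_sq_le
    have hm' : (m:ℝ) * m ≤ (n:ℝ) := by exact_mod_cast hm
    have : (0:ℝ) ≤ n := Nat.cast_nonneg n
    nlinarith
  rw [← @Nat.cast_le ℝ]
  simp only [Nat.cast_add, Nat.cast_one, Nat.cast_mul, Nat.cast_pow, Nat.cast_ofNat, ← Real.rpow_natCast]
  refine _root_.trans ?_ (ram_real_main (by exact_mod_cast n_large) (by positivity) hmx)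
  have n2_pos : (1:ℝ) ≤ 2 * (n:ℝ) := by
    have : (8192:ℝ) ≤ n := by exact_mod_cast n_large
    linarith
  gcongr
  · push_cast
    rw [show (2*(n:ℝ)) = ((2*n:ℕ):ℝ) by push_cast; ring]
    exact_mod_cast Real.nat_sqrt_le_real_sqrt
  · norm_num1
  · calc ((2*n/3 : ℕ):ℝ) ≤ ((2*n:ℕ):ℝ)/((3:ℕ):ℝ) := Nat.cast_div_le
      _ = 2*(n:ℝ)/3 := by push_cast; ring

theorem ram_centralBinom_le (n : ℕ) (n_large : 2 < n) :
    centralBinom n ≤ (2 * n) ^ Nat.sqrt (2 * n) * 4 ^ (2 * n / 3) *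
      (2 * n) ^ ((Finset.Ioc n (2 * n)).filter Nat.Prime).card := by
  have n_pos : 0 < n := (Nat.zero_le _).trans_lt n_large
  have n2_pos : 1 ≤ 2 * n := mul_pos (zero_lt_two' ℕ) n_pos
  let f : ℕ → ℕ := fun x => x ^ n.centralBinom.factorization x
  have hdiv : 2 * n / 3 + 1 ≤ 2 * n + 1 := Nat.add_le_add_right (Nat.div_le_self _ _) _
  have hsplit : centralBinom n =
      (∏ x ∈ Finset.range (2 * n / 3 + 1), f x) * ∏ x ∈ Finset.Ico (2 * n / 3 + 1) (2 * n + 1), f x := by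
    rw [← n.prod_pow_factorization_centralBinom, Finset.range_eq_Ico,
      ← Finset.prod_Ico_consecutive _ (Nat.zero_le _) hdiv]
    rw [← Finset.range_eq_Ico]
  rw [hsplit]
  apply mul_le_mul'
  · -- primes up to 2n/3, as in mathlib's Bertrand proof
    let S := (Finset.range (2 * n / 3 + 1)).filter Nat.Prime
    have : ∏ x ∈ S, f x = ∏ x ∈ Finset.range (2 * n / 3 + 1), f x := by
      refine Finset.prod_filter_of_ne fun p _ h => ?_
      contrapose! h; dsimp only [f]
      rw [factorization_eq_zero_of_not_prime n.centralBinom h, _root_.pow_zero]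
    rw [← this, ← Finset.prod_filter_mul_prod_filter_not S (· ≤ Nat.sqrt (2 * n))]
    apply mul_le_mul'
    · refine (Finset.prod_le_prod' fun p _ => (?_ : f p ≤ 2 * n)).trans ?_
      · exact pow_factorization_choose_le (mul_pos two_pos n_pos)
      have : (Finset.Icc 1 (Nat.sqrt (2 * n))).card = Nat.sqrt (2 * n) := by
        rw [Nat.card_Icc, Nat.add_sub_cancel]
      rw [Finset.prod_const]
      refine pow_right_mono₀ n2_pos ((Finset.card_le_card fun x hx => ?_).trans this.le)
      obtain ⟨h1, h2⟩ := Finset.mem_filter.1 hx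
      exact Finset.mem_Icc.mpr ⟨(Finset.mem_filter.1 h1).2.one_lt.le, h2⟩
    · refine le_trans ?_ (primorial_le_4_pow (2 * n / 3))
      refine (Finset.prod_le_prod' fun p hp => (?_ : f p ≤ p)).trans ?_
      · obtain ⟨h1, h2⟩ := Finset.mem_filter.1 hp
        refine (pow_right_mono₀ (Finset.mem_filter.1 h1).2.one_lt.le ?_).trans (pow_one p).le
        exact Nat.factorization_choose_le_one (Nat.sqrt_lt'.mp <| not_le.1 h2)
      refine Finset.prod_le_prod_of_subset_of_one_le' (Finset.filter_subset _ _) ?_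
      exact fun p hp _ => (Finset.mem_filter.1 hp).2.one_lt.le
  · -- primes in (2n/3, 2n]
    calc ∏ x ∈ Finset.Ico (2 * n / 3 + 1) (2 * n + 1), f x
        ≤ ∏ x ∈ Finset.Ico (2 * n / 3 + 1) (2 * n + 1),
            (if Nat.Prime x ∧ n < x then 2 * n else 1) := by
          refine Finset.prod_le_prod' fun x hx => ?_
          obtain ⟨hx1, hx2⟩ := Finset.mem_Ico.mp hx
          by_cases hp : Nat.Prime x
          · by_cases hnx : n < x
            · simp only [hp, hnx, and_self, if_true]
              exact pow_factorization_choose_le (mul_pos two_pos n_pos)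
            · have h3x : 2 * n < 3 * x := by omega
              simp only [hp, hnx, and_false, if_false, f]
              rw [Nat.factorization_centralBinom_of_two_mul_self_lt_three_mul n_large
                (not_lt.mp hnx) h3x, _root_.pow_zero]
          · simp only [hp, false_and, if_false, f]
            rw [factorization_eq_zero_of_not_prime n.centralBinom hp, _root_.pow_zero]
      _ = (2 * n) ^ ((Finset.Ioc n (2 * n)).filter Nat.Prime).card := by
          rw [Finset.prod_ite, Finset.prod_const, Finset.prod_const, one_pow, mul_one]
          congr 1
          apply Finset.card_nbij id
          · intro x hx
            simp only [Finset.mem_filter, Finset.mem_Ico, Finset.mem_Ioc, Finset.mem_coe, id] at hx ⊢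
            exact ⟨⟨hx.2.2, by omega⟩, hx.2.1⟩
          · intro x hx y hy h; exact h
          · intro x hx
            simp only [Finset.mem_filter, Finset.mem_Ioc, Finset.coe_filter, Set.mem_image,
              Set.mem_setOf_eq, Finset.mem_coe, Finset.mem_Ico] at hx ⊢
            exact ⟨x, ⟨⟨by omega, by omega⟩, ⟨hx.2, hx.1.1⟩⟩, rfl⟩

theorem ram_count_split (n : ℕ) :
    Nat.primeCounting (2 * n) =
      Nat.primeCounting n + ((Finset.Ioc n (2 * n)).filter Nat.Prime).card := by
  rw [Nat.primeCounting, Nat.primeCounting, Nat.primeCounting',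
    Nat.count_eq_card_filter_range, Nat.count_eq_card_filter_range]
  rw [Finset.range_eq_Ico, ← Finset.Ico_union_Ico_eq_Ico (Nat.zero_le (n+1)) (by omega :
    n + 1 ≤ 2 * n + 1), Finset.filter_union, Finset.card_union_of_disjoint, ← Finset.range_eq_Ico]
  · congr 2
    congr 1
    ext x
    simp only [Finset.mem_Ico, Finset.mem_Ioc]
    omega
  · exact Finset.disjoint_filter_filter (Finset.Ico_disjoint_Ico_consecutive _ _ _)

theorem ram_count_lower {n m : ℕ} (n_large : 8192 ≤ n) (hm : m * m ≤ n) :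
    Nat.primeCounting n + m ≤ Nat.primeCounting (2 * n) := by
  rw [ram_count_split]
  have h3 : 2 < n := by omega
  by_contra hlt
  push_neg at hlt
  set k := ((Finset.Ioc n (2 * n)).filter Nat.Prime).card with hk
  have hkm : k ≤ m := by omega
  have H2 : 4 ^ n < n * n.centralBinom := Nat.four_pow_lt_mul_centralBinom n (by omega)
  have H3 := ram_centralBinom_le n h3
  have H4 : n * n.centralBinom ≤ n * (2 * n) ^ (Nat.sqrt (2 * n) + k) * 4 ^ (2 * n / 3) := by
    calc n * n.centralBinom
        ≤ n * ((2 * n) ^ Nat.sqrt (2 * n) * 4 ^ (2 * n / 3) * (2 * n) ^ k) :=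
          Nat.mul_le_mul_left n H3
      _ = n * (2 * n) ^ (Nat.sqrt (2 * n) + k) * 4 ^ (2 * n / 3) := by rw [pow_add]; ring
  have H5 : n * (2 * n) ^ (Nat.sqrt (2 * n) + k) * 4 ^ (2 * n / 3) ≤
      n * (2 * n) ^ (Nat.sqrt (2 * n) + m) * 4 ^ (2 * n / 3) := by
    have : (2 * n) ^ (Nat.sqrt (2 * n) + k) ≤ (2 * n) ^ (Nat.sqrt (2 * n) + m) :=
      Nat.pow_le_pow_right (by omega) (by omega)
    exact Nat.mul_le_mul (Nat.mul_le_mul_left n this) le_rfl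
  have := ram_nat_main n_large hm
  omega

theorem ram_exists (m : ℕ) : ∃ R : ℕ, 0 < R ∧ ∀ x : ℕ, R ≤ x →
    m ≤ Nat.primeCounting x - Nat.primeCounting (x / 2) := by
  refine ⟨2 * (8192 + m * m), by positivity, fun x hx => ?_⟩
  set n := x / 2 with hn
  have hn1 : 8192 ≤ n := by omega
  have hm : m * m ≤ n := by omega
  have h1 := ram_count_lower hn1 hm
  have h2 : Nat.primeCounting (2 * n) ≤ Nat.primeCounting x :=
    Nat.monotone_primeCounting (by omega)
  omega

theorem primeCounting_succ_le (x : ℕ) :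
    Nat.primeCounting (x + 1) ≤ Nat.primeCounting x + 1 := by
  rw [Nat.primeCounting, Nat.primeCounting]
  show Nat.count Nat.Prime (x + 1 + 1) ≤ Nat.count Nat.Prime (x + 1) + 1
  rw [Nat.count_succ]
  split <;> omega

end RamanujanNatAux

/-- For every n ≥ 1, π(R_n) − π(⌊R_n/2⌋) = n. -/
theorem primeCounting_ramanujan (n : ℕ) (hn : 1 ≤ n) :
    Nat.primeCounting (ramanujan n) - Nat.primeCounting (ramanujan n / 2) = n := by
  have hne : {R : ℕ | 0 < R ∧ ∀ x : ℕ, R ≤ x →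
      n ≤ Nat.primeCounting x - Nat.primeCounting (x / 2)}.Nonempty := by
    obtain ⟨R, hR⟩ := ram_exists n
    exact ⟨R, hR⟩
  have hmem : ramanujan n ∈ {R : ℕ | 0 < R ∧ ∀ x : ℕ, R ≤ x →
      n ≤ Nat.primeCounting x - Nat.primeCounting (x / 2)} := Nat.sInf_mem hne
  obtain ⟨hpos, hall⟩ := hmem
  set R := ramanujan n with hRdef
  have hlow : n ≤ Nat.primeCounting R - Nat.primeCounting (R / 2) := hall R le_rfl
  have hR2 : 2 ≤ R := by
    by_contra h
    have hR1 : R = 1 := by omega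
    have h1 := hall 1 (by omega)
    have e1 : Nat.primeCounting 1 = 0 := by decide
    have e0 : Nat.primeCounting 0 = 0 := by decide
    rw [show (1:ℕ)/2 = 0 from rfl, e1, e0] at h1
    omega
  have hnot : R - 1 ∉ {R : ℕ | 0 < R ∧ ∀ x : ℕ, R ≤ x →
      n ≤ Nat.primeCounting x - Nat.primeCounting (x / 2)} :=
    Nat.notMem_of_lt_sInf (show R - 1 < R by omega)
  simp only [Set.mem_setOf_eq, not_and] at hnot
  have hnot2 := hnot (by omega)
  push_neg at hnot2
  obtain ⟨x, hx1, hx2⟩ := hnot2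
  have hxeq : x = R - 1 := by
    by_contra hne2
    exact absurd (hall x (by omega)) (by omega)
  subst hxeq
  have hsucc := primeCounting_succ_le (R - 1)
  rw [Nat.sub_add_cancel (by omega)] at hsucc
  have hmono : Nat.primeCounting ((R - 1) / 2) ≤ Nat.primeCounting (R / 2) :=
    Nat.monotone_primeCounting (by omega)
  omega
end

section
/- Let p be an odd prime with p = p_n and n ≥ 3. Then the following two conditions are equivalent: (Condition 3) every integer k with (p_{n-1}+1)/2 ≤ k ≤ (p−1)/2 is composite (equivalently, there is no prime q with p_{n-1}/2 < q < p/2); (Condition 4) letting m be the unique index with p_m < p/2 < p_{m+1}, the open interval (2p_m, p) contains a prime. -/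
private lemma prime_infinite : {n : ℕ | n.Prime}.Infinite := Nat.infinite_setOf_prime

private lemma prime_nth (i : ℕ) : (Nat.nth Nat.Prime i).Prime :=
  Nat.nth_mem_of_infinite prime_infinite i

private lemma prime_le_nth {q i : ℕ} (hq : q.Prime) (h : q < Nat.nth Nat.Prime (i + 1)) :
    q ≤ Nat.nth Nat.Prime i := by
  have hc : Nat.nth Nat.Prime (Nat.count Nat.Prime q) = q := Nat.nth_count hq
  have : Nat.count Nat.Prime q < i + 1 := by
    rw [← Nat.nth_lt_nth prime_infinite]; rw [hc]; exact h
  calc q = Nat.nth Nat.Prime (Nat.count Nat.Prime q) := hc.symm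
    _ ≤ Nat.nth Nat.Prime i := (Nat.nth_le_nth prime_infinite).2 (by omega)

/-- Let p be an odd prime with p = p_n, n ≥ 3.  Then Condition 3 (every
integer k with (p_{n-1}+1)/2 ≤ k ≤ (p−1)/2 is composite) is equivalent to
Condition 4 (with m the unique index such that p_m < p/2 < p_{m+1}, the open
interval (2p_m, p) contains a prime). -/
theorem condition3_iff_condition4 (p n m : ℕ) (hn : 3 ≤ n) (hm : 1 ≤ m)
    (hp : p = nthPrime n) (hodd : Odd p)
    (hm1 : 2 * nthPrime m < p) (hm2 : p < 2 * nthPrime (m + 1)) :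
    (∀ k : ℕ, (nthPrime (n - 1) + 1) / 2 ≤ k → k ≤ (p - 1) / 2 → ¬ k.Prime) ↔
    (∃ q : ℕ, q.Prime ∧ 2 * nthPrime m < q ∧ q < p) := by
  obtain ⟨s, hs⟩ := hodd
  -- p_{n-1}
  have hn1 : nthPrime (n - 1) = Nat.nth Nat.Prime (n - 2) := by
    unfold nthPrime; congr 1
  -- fix
  have hn1p : (nthPrime (n - 1)).Prime := hn1 ▸ prime_nth (n - 2)
  have h2lt : Nat.nth Nat.Prime 0 < Nat.nth Nat.Prime (n - 2) :=
    (Nat.nth_lt_nth prime_infinite).2 (by omega)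
  have hnth0 : Nat.nth Nat.Prime 0 = 2 := Nat.nth_count Nat.prime_two ▸ by
    norm_num [Nat.count_succ]
  have hodd1 : Odd (nthPrime (n - 1)) :=
    hn1p.odd_of_ne_two (by omega)
  obtain ⟨t, ht⟩ := hodd1
  have hdiv : (nthPrime (n - 1) + 1) / 2 = t + 1 := by omega
  -- p_m
  have hmdef : nthPrime m = Nat.nth Nat.Prime (m - 1) := rfl
  have hmp : (nthPrime m).Prime := prime_nth (m - 1)
  have hm1def : nthPrime (m + 1) = Nat.nth Nat.Prime m := by
    unfold nthPrime; congr 1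
  -- p = nth (n-1)
  have hpdef : p = Nat.nth Nat.Prime (n - 1) := hp
  have hpn1lt : nthPrime (n - 1) < p := by
    rw [hn1, hpdef]; exact (Nat.nth_lt_nth prime_infinite).2 (by omega)
  constructor
  · intro h
    refine ⟨nthPrime (n - 1), hn1p, ?_, hpn1lt⟩
    have hkle : nthPrime m ≤ (p - 1) / 2 := by omega
    have hlow : nthPrime m < (nthPrime (n - 1) + 1) / 2 := by
      by_contra hcon
      push_neg at hcon
      exact h (nthPrime m) hcon hkle hmp
    omega
  · rintro ⟨q, hq, hq1, hq2⟩ k hk1 hk2 hkp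
    -- k < nth m, so k ≤ nth (m-1) = nthPrime m
    have hklt : k < Nat.nth Nat.Prime m := by
      rw [hm1def] at hm2; omega
    have hkle : k ≤ nthPrime m := by
      rw [hmdef]
      have : k < Nat.nth Nat.Prime ((m - 1) + 1) := by
        have : (m - 1) + 1 = m := by omega
        rw [this]; exact hklt
      exact prime_le_nth hkp this
    -- p_{n-1} < 2k ≤ 2 p_m < q < p
    have h1 : nthPrime (n - 1) < q := by omega
    have h2 : q ≤ Nat.nth Nat.Prime (n - 2) := by
      apply prime_le_nth hq
      have : (n - 2) + 1 = n - 1 := by omega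
      rw [this, ← hpdef]; exact hq2
    rw [hn1] at h1; omega
end

section
/- If p is a Labos prime with p = p_n and n ≥ 3, then every integer k with (p_{n-1}+1)/2 ≤ k ≤ (p−1)/2 is composite (i.e., p satisfies Condition 3). -/
/-- The n-th Labos prime: the smallest positive integer L with
π(L) − π(⌊L/2⌋) = n. -/
noncomputable def labos (n : ℕ) : ℕ :=
  sInf {L : ℕ | 0 < L ∧ Nat.primeCounting L - Nat.primeCounting (L / 2) = n}

/-- A Labos prime is a number of the form L_n for some n ≥ 1. -/
def IsLabosPrime (p : ℕ) : Prop := ∃ n : ℕ, 1 ≤ n ∧ p = labos n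

private lemma pi_succ (t : ℕ) :
    Nat.primeCounting (t + 1) ≤ Nat.primeCounting t + 1 := by
  show Nat.count Nat.Prime (t + 1 + 1) ≤ Nat.count Nat.Prime (t + 1) + 1
  rw [Nat.count_succ]
  split <;> omega

/-- discrete IVT for the Labos counting function -/
private lemma exists_hit (m : ℕ) :
    ∀ t : ℕ, m ≤ Nat.primeCounting t - Nat.primeCounting (t / 2) →
      ∃ L, L ≤ t ∧ Nat.primeCounting L - Nat.primeCounting (L / 2) = m := by
  intro t
  induction t with
  | zero => intro h; exact ⟨0, le_rfl, by simpa using h.antisymm' (by simp)⟩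
  | succ t ih =>
    intro h
    by_cases h' : m ≤ Nat.primeCounting t - Nat.primeCounting (t / 2)
    · obtain ⟨L, hL, hfL⟩ := ih h'
      exact ⟨L, hL.trans (Nat.le_succ t), hfL⟩
    · refine ⟨t + 1, le_rfl, ?_⟩
      have h1 := pi_succ t
      have h2 : Nat.primeCounting (t / 2) ≤ Nat.primeCounting ((t + 1) / 2) :=
        Nat.monotone_primeCounting (by omega)
      omega

private lemma pi_nth (a : ℕ) :
    Nat.primeCounting (Nat.nth Nat.Prime a) = a + 1 := by
  show Nat.count Nat.Prime (Nat.nth Nat.Prime a + 1) = a + 1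
  rw [Nat.count_succ, Nat.count_nth_of_infinite Nat.infinite_setOf_prime,
    if_pos (Nat.nth_mem_of_infinite Nat.infinite_setOf_prime a)]

private lemma pi_of_prime {k : ℕ} (hk : k.Prime) :
    Nat.primeCounting k = Nat.primeCounting (k - 1) + 1 := by
  have h2 := hk.two_le
  have : k - 1 + 1 = k := by omega
  show Nat.count Nat.Prime (k + 1) = Nat.count Nat.Prime (k - 1 + 1) + 1
  rw [Nat.count_succ, if_pos hk, this]

/-- If p is a Labos prime with p = p_n and n ≥ 3, then every integer k with
(p_{n-1}+1)/2 ≤ k ≤ (p−1)/2 is composite (Condition 3). -/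
theorem labos_satisfies_condition3 (p n : ℕ) (hn : 3 ≤ n)
    (hp : p = nthPrime n) (hlab : IsLabosPrime p) :
    ∀ k : ℕ, (nthPrime (n - 1) + 1) / 2 ≤ k → k ≤ (p - 1) / 2 → ¬ k.Prime := by
  intro k hk1 hk2 hk
  obtain ⟨m, hm1, hm2⟩ := hlab
  obtain ⟨b, rfl⟩ : ∃ b, n = b + 3 := ⟨n - 3, by omega⟩
  set q : ℕ := nthPrime (b + 3 - 1) with hq
  have hinf := Nat.infinite_setOf_prime
  -- indices
  set a : ℕ := b + 1 with ha
  have hpa : p = Nat.nth Nat.Prime (a + 1) := by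
    rw [hp, nthPrime]; congr 1
  have hqa : q = Nat.nth Nat.Prime a := by
    rw [hq, nthPrime]; congr 1
  -- basic facts
  have hqp : q < p := by
    rw [hpa, hqa]; exact (Nat.nth_lt_nth hinf).mpr (Nat.lt_succ_self a)
  have hq3 : 3 ≤ q := by
    rw [hqa]
    calc 3 = Nat.nth Nat.Prime 1 := Nat.nth_prime_one_eq_three.symm
    _ ≤ Nat.nth Nat.Prime a := (Nat.nth_le_nth hinf).mpr (by omega)
  have hqprime : q.Prime := hqa ▸ Nat.nth_mem_of_infinite hinf a
  have hpprime : p.Prime := hpa ▸ Nat.nth_mem_of_infinite hinf (a + 1)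
  have hqodd : q % 2 = 1 := by
    rcases hqprime.eq_two_or_odd with h | h
    · omega
    · exact h
  have hpodd : p % 2 = 1 := by
    rcases hpprime.eq_two_or_odd with h | h
    · omega
    · exact h
  -- translate the hypotheses on k
  have h2k1 : q + 1 ≤ 2 * k := by omega
  have h2k2 : 2 * k ≤ p - 1 := by omega
  have hk2' : 2 ≤ k := hk.two_le
  -- prime counting values
  have hpiq : Nat.primeCounting q = a + 1 := hqa ▸ pi_nth a
  have hpip : Nat.primeCounting p = a + 2 := by rw [hpa, pi_nth]
  have hpip1 : Nat.primeCounting (p - 1) = a + 1 := by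
    rw [Nat.primeCounting_sub_one, hpa, Nat.primeCounting'_nth_eq]
  have hx : Nat.primeCounting (2 * k - 1) = a + 1 := by
    have h1 : Nat.primeCounting q ≤ Nat.primeCounting (2 * k - 1) :=
      Nat.monotone_primeCounting (by omega)
    have h2 : Nat.primeCounting (2 * k - 1) ≤ Nat.primeCounting (p - 1) :=
      Nat.monotone_primeCounting (by omega)
    omega
  have hpik : Nat.primeCounting k = Nat.primeCounting (k - 1) + 1 := pi_of_prime hk
  have hdiv : (2 * k - 1) / 2 = k - 1 := by omega
  have hpdiv : p / 2 = (p - 1) / 2 := by omega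
  have hmono1 : Nat.primeCounting k ≤ Nat.primeCounting ((p - 1) / 2) :=
    Nat.monotone_primeCounting hk2
  have hmono2 : Nat.primeCounting k ≤ Nat.primeCounting (2 * k - 1) :=
    Nat.monotone_primeCounting (by omega)
  -- p is the minimum of the labos set, and belongs to it
  set S : Set ℕ :=
    {L : ℕ | 0 < L ∧ Nat.primeCounting L - Nat.primeCounting (L / 2) = m} with hS
  have hSne : S.Nonempty := by
    by_contra h
    rw [Set.not_nonempty_iff_eq_empty] at h
    have : p = 0 := by rw [hm2, labos, ← hS, h, Nat.sInf_empty]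
    have := hpprime.two_le
    omega
  have hpS : p ∈ S := by
    have := Nat.sInf_mem hSne
    rwa [hm2, labos, ← hS]
  have hmval : Nat.primeCounting p - Nat.primeCounting (p / 2) = m := hpS.2
  rw [hpdiv, hpip] at hmval
  -- f(2k-1) ≥ m
  have hfge : m ≤ Nat.primeCounting (2 * k - 1) -
      Nat.primeCounting ((2 * k - 1) / 2) := by
    rw [hdiv, hx]
    omega
  obtain ⟨L, hL, hfL⟩ := exists_hit m (2 * k - 1) hfge
  have hLpos : 0 < L := by
    rcases Nat.eq_zero_or_pos L with h | h
    · rw [h] at hfL; simp at hfL; omega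
    · exact h
  have hLS : L ∈ S := ⟨hLpos, hfL⟩
  have : p ≤ L := by
    rw [hm2, labos, ← hS]
    exact Nat.sInf_le hLS
  omega
end

section
/- If p is a Labos prime with p = p_n and n ≥ 3, and m is the unique index with p_m < p/2 < p_{m+1}, then the open interval (2p_m, p) contains a prime (i.e., p satisfies Condition 4). -/
private lemma count_le_of_gap {a b : ℕ} (h : ∀ q, q < b → q.Prime → q < a) :
    Nat.count Nat.Prime b ≤ Nat.count Nat.Prime a := by
  classical
  rw [Nat.count_eq_card_filter_range, Nat.count_eq_card_filter_range]
  apply Finset.card_le_card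
  intro q hq
  simp only [Finset.mem_filter, Finset.mem_range] at hq ⊢
  exact ⟨h q hq.1 hq.2, hq.2⟩

private lemma pi_eq_of_between {i x : ℕ} (h1 : Nat.nth Nat.Prime i ≤ x)
    (h2 : x < Nat.nth Nat.Prime (i + 1)) : Nat.primeCounting x = i + 1 := by
  have hinf := Nat.infinite_setOf_prime
  apply le_antisymm
  · calc Nat.primeCounting x = Nat.count Nat.Prime (x + 1) := rfl
      _ ≤ Nat.count Nat.Prime (Nat.nth Nat.Prime (i + 1)) :=
        Nat.count_monotone _ (by omega)
      _ = i + 1 := Nat.count_nth_of_infinite hinf _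
  · calc i + 1 = Nat.count Nat.Prime (Nat.nth Nat.Prime i + 1) :=
        (Nat.count_nth_succ_of_infinite hinf i).symm
      _ ≤ Nat.count Nat.Prime (x + 1) := Nat.count_monotone _ (by omega)
      _ = Nat.primeCounting x := rfl

/-- If p is a Labos prime with p = p_n, n ≥ 3, and m is the unique index with
p_m < p/2 < p_{m+1}, then the open interval (2p_m, p) contains a prime
(Condition 4). -/
theorem labos_satisfies_condition4 (p n m : ℕ) (hn : 3 ≤ n) (hm : 1 ≤ m)
    (hp : p = nthPrime n) (hlab : IsLabosPrime p)
    (hm1 : 2 * nthPrime m < p) (hm2 : p < 2 * nthPrime (m + 1)) :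
    ∃ q : ℕ, q.Prime ∧ 2 * nthPrime m < q ∧ q < p := by
  by_contra hcon
  push_neg at hcon
  have hinf := Nat.infinite_setOf_prime
  set pm := nthPrime m with hpm
  -- basic facts
  have hppr : p.Prime := by rw [hp]; exact Nat.prime_nth_prime _
  have hpmpr : pm.Prime := Nat.prime_nth_prime _
  have hpm2 : 2 ≤ pm := hpmpr.two_le
  have hp5 : 5 ≤ p := by omega
  have hpodd : p % 2 = 1 := by
    rcases hppr.eq_two_or_odd with h | h
    · omega
    · exact h
  -- π p = n
  have hpi_p : Nat.primeCounting p = n := by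
    have : Nat.primeCounting p = Nat.count Nat.Prime (p + 1) := rfl
    rw [this, hp]
    show Nat.count Nat.Prime (Nat.nth Nat.Prime (n - 1) + 1) = n
    rw [Nat.count_nth_succ_of_infinite hinf]
    omega
  -- π (p/2) = m
  have hdiv1 : pm ≤ p / 2 := by omega
  have hdiv2 : p / 2 < nthPrime (m + 1) := by omega
  have hpi_half : Nat.primeCounting (p / 2) = m := by
    have := pi_eq_of_between (i := m - 1) (x := p / 2)
      (by simpa [hpm, nthPrime] using hdiv1)
      (by have : m - 1 + 1 = (m + 1) - 1 := by omega
          rw [this]; simpa [nthPrime] using hdiv2)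
    omega
  -- m < n
  have hmn : m < n := by
    have hlt : Nat.nth Nat.Prime (m - 1) < Nat.nth Nat.Prime (n - 1) := by
      have : pm < p := by omega
      simpa [hpm, nthPrime, hp] using this
    have := (Nat.nth_lt_nth hinf).mp hlt
    omega
  -- extract Labos structure
  obtain ⟨k, hk1, hkp⟩ := hlab
  have hSne : {L : ℕ | 0 < L ∧ Nat.primeCounting L - Nat.primeCounting (L / 2) = k}.Nonempty := by
    by_contra hS
    rw [Set.not_nonempty_iff_eq_empty] at hS
    rw [labos, hS, Nat.sInf_empty] at hkp
    omega
  have hpmem : p ∈ {L : ℕ | 0 < L ∧ Nat.primeCounting L - Nat.primeCounting (L / 2) = k} := by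
    rw [hkp, labos]; exact Nat.sInf_mem hSne
  obtain ⟨-, hfk⟩ := hpmem
  have hkval : k = n - m := by rw [hpi_p, hpi_half] at hfk; omega
  -- count of primes up to 2*pm - 1 equals n - 1
  have hcount_p : Nat.count Nat.Prime p = n - 1 := by
    have : Nat.count Nat.Prime p = Nat.count Nat.Prime (Nat.nth Nat.Prime (n - 1)) := by
      rw [hp]; rfl
    rw [this, Nat.count_nth_of_infinite hinf]
  have hgap : Nat.count Nat.Prime p ≤ Nat.count Nat.Prime (2 * pm) := by
    apply count_le_of_gap
    intro q hq hqpr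
    by_contra h
    push_neg at h
    have hq2 : 2 * pm < q := by
      rcases Nat.lt_or_ge (2 * pm) q with h' | h'
      · exact h'
      · -- q = 2 * pm, even and ≥ 4, not prime
        have : q = 2 * pm := by omega
        exfalso
        have : ¬ q.Prime := by
          rw [this]
          intro hpr
          rcases hpr.eq_two_or_odd with h2 | hodd
          · omega
          · omega
        exact this hqpr
    exact absurd (hcon q hqpr hq2) (by omega)
  have hpiL0 : Nat.primeCounting (2 * pm - 1) = n - 1 := by
    have h1 : Nat.primeCounting (2 * pm - 1) = Nat.count Nat.Prime (2 * pm) := by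
      have : 2 * pm - 1 + 1 = 2 * pm := by omega
      show Nat.count Nat.Prime (2 * pm - 1 + 1) = _
      rw [this]
    have h2 : Nat.count Nat.Prime (2 * pm) ≤ Nat.count Nat.Prime p :=
      Nat.count_monotone _ (by omega)
    omega
  -- ⌊(2pm - 1)/2⌋ = pm - 1 and its prime count is m - 1
  have hhalfL0 : (2 * pm - 1) / 2 = pm - 1 := by omega
  have hpihalfL0 : Nat.primeCounting (pm - 1) = m - 1 := by
    have : Nat.primeCounting (pm - 1) = Nat.count Nat.Prime pm := by
      have : pm - 1 + 1 = pm := by omega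
      show Nat.count Nat.Prime (pm - 1 + 1) = _
      rw [this]
    rw [this]
    have : Nat.count Nat.Prime pm = Nat.count Nat.Prime (Nat.nth Nat.Prime (m - 1)) := rfl
    rw [this, Nat.count_nth_of_infinite hinf]
  -- 2*pm - 1 is in the Labos set
  have hL0mem : 2 * pm - 1 ∈
      {L : ℕ | 0 < L ∧ Nat.primeCounting L - Nat.primeCounting (L / 2) = k} := by
    refine ⟨by omega, ?_⟩
    rw [hhalfL0, hpiL0, hpihalfL0, hkval]
    omega
  have := Nat.sInf_le hL0mem
  rw [← labos, ← hkp] at this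
  omega
end

section
/- The prime 131 satisfies Condition 3 (every integer k with 64 ≤ k ≤ 65 is composite, 127 being the prime preceding 131), but 131 is not a Labos prime; that is, 131 is a pseudo-Labos prime. -/
/-- The prime 131 satisfies Condition 3: with n its index among the primes
(n ≥ 3), every integer k with (p_{n-1}+1)/2 ≤ k ≤ (131−1)/2 is composite
(concretely, every k with 64 ≤ k ≤ 65 is composite, 127 being the prime
preceding 131); yet 131 is not a Labos prime.  Hence 131 is a pseudo-Labos
prime. -/
theorem pseudoLabos_131 :
    Nat.Prime 131 ∧ Odd 131 ∧
    (∀ n : ℕ, 3 ≤ n → (131 : ℕ) = nthPrime n →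
      ∀ k : ℕ, (nthPrime (n - 1) + 1) / 2 ≤ k → k ≤ (131 - 1) / 2 → ¬ k.Prime) ∧
    (∀ k : ℕ, 64 ≤ k → k ≤ 65 → ¬ k.Prime) ∧
    ¬ IsLabosPrime 131 := by
  have nth31 : Nat.nth Nat.Prime 31 = 131 := by
    have h := Nat.nth_count (p := Nat.Prime) (n := 131) (by norm_num)
    have hc : Nat.count Nat.Prime 131 = 31 := by set_option maxRecDepth 100000 in decide
    set_option maxRecDepth 100000 in rwa [hc] at h
  have nth30 : Nat.nth Nat.Prime 30 = 127 := by
    have h := Nat.nth_count (p := Nat.Prime) (n := 127) (by norm_num)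
    have hc : Nat.count Nat.Prime 127 = 30 := by set_option maxRecDepth 100000 in decide
    set_option maxRecDepth 100000 in rwa [hc] at h
  refine ⟨by norm_num, by decide, ?_, ?_, ?_⟩
  · intro n hn h131 k hk1 hk2
    have hn32 : n = 32 := by
      have hinj := Nat.nth_injective Nat.infinite_setOf_prime
      have : n - 1 = 31 := hinj (by rw [← nth31] at h131; exact h131.symm ▸ rfl)
      omega
    subst hn32
    have : nthPrime 31 = 127 := by simp [nthPrime, nth30]
    rw [this] at hk1
    interval_cases k <;> decide
  · intro k hk1 hk2
    interval_cases k <;> decide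
  · rintro ⟨n, hn, h⟩
    have h131ne : (131 : ℕ) ≠ 0 := by norm_num
    have hSne : {L : ℕ | 0 < L ∧ Nat.primeCounting L - Nat.primeCounting (L / 2) = n}.Nonempty := by
      by_contra hemp
      rw [Set.not_nonempty_iff_eq_empty] at hemp
      rw [labos, hemp, Nat.sInf_empty] at h
      exact h131ne h
    have hmem : (131 : ℕ) ∈ {L : ℕ | 0 < L ∧ Nat.primeCounting L - Nat.primeCounting (L / 2) = n} := by
      rw [h, labos]; exact Nat.sInf_mem hSne
    have hpc131 : Nat.primeCounting 131 = 32 := by set_option maxRecDepth 100000 in decide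
    have hpc65 : Nat.primeCounting 65 = 18 := by set_option maxRecDepth 100000 in decide
    have hn14 : n = 14 := by
      have := hmem.2
      norm_num [hpc131, hpc65] at this
      omega
    have h113 : (113 : ℕ) ∈ {L : ℕ | 0 < L ∧ Nat.primeCounting L - Nat.primeCounting (L / 2) = n} := by
      have hpc113 : Nat.primeCounting 113 = 30 := by set_option maxRecDepth 100000 in decide
      have hpc56 : Nat.primeCounting 56 = 16 := by set_option maxRecDepth 100000 in decide
      refine ⟨by norm_num, ?_⟩
      norm_num [hpc113, hpc56, hn14]
    have := Nat.sInf_le h113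
    rw [← labos, ← h] at this
    omega
end
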